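/- arXiv:2202.04579 — 10 statements merged into one kernel-verified Lean document; each statement's English description precedes it below -/
import Mathlib

section
/- Let F be a discrete O(d)-bundle on a connected graph G, and define r as the maximum over all pairs of nodes (v,u) and pairs of paths γ, γ' from v to u of the operator norm of P^γ_{v→u} − P^{γ'}_{v→u}, where P^γ denotes the transport map along the path γ. Then the smallest eigenvalue λ_0 of the normalised sheaf Laplacian Δ_F satisfies λ_0 ≤ r²/2. -/
open Matrix BigOperators

/-- The transport map along a path `(v₀, v₁, …, v_L)`, composing `F_{v_{i+1}⊴e}ᵀ F_{v_i⊴e}`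
along consecutive edges.  `F v u` denotes `F_{v ⊴ e}` for the edge `e = (v,u)`. -/
def transport {V : Type*} {d : ℕ} (F : V → V → Matrix (Fin d) (Fin d) ℝ) :
    List V → Matrix (Fin d) (Fin d) ℝ
  | [] => 1
  | [_] => 1
  | v :: u :: rest => transport F (u :: rest) * ((F u v)ᵀ * F v u)

/-- `p` is a walk in `G` from `v` to `u`. -/
def IsPathFrom {V : Type*} (G : SimpleGraph V) (p : List V) (v u : V) : Prop :=
  p.head? = some v ∧ p.getLast? = some u ∧ p.Chain' G.Adj

/-- The normalised sheaf Laplacian `Δ_F = D^{-1/2} L_F D^{-1/2}`, written as a matrix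
indexed by `V × Fin d`, for a sheaf with `d`-dimensional stalks. -/
noncomputable def normSheafLaplacian {V : Type*} [Fintype V] [DecidableEq V] (G : SimpleGraph V)
    [DecidableRel G.Adj] {d : ℕ} (F : V → V → Matrix (Fin d) (Fin d) ℝ) :
    Matrix (V × Fin d) (V × Fin d) ℝ :=
  fun p q =>
    (if p.1 = q.1 then (∑ w ∈ G.neighborFinset p.1, (F p.1 w)ᵀ * F p.1 w) p.2 q.2
     else if G.Adj p.1 q.1 then -(((F p.1 q.1)ᵀ * F q.1 p.1) p.2 q.2) else 0)
    / (Real.sqrt (G.degree p.1) * Real.sqrt (G.degree q.1))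

section aux

variable {V : Type*} {d : ℕ}

lemma star_eq_transpose' (A : Matrix (Fin d) (Fin d) ℝ) : star A = Aᵀ := by
  rw [Matrix.star_eq_conjTranspose, Matrix.conjTranspose_eq_transpose_of_trivial]

lemma transpose_mem_OG {A : Matrix (Fin d) (Fin d) ℝ}
    (h : A ∈ Matrix.orthogonalGroup (Fin d) ℝ) : Aᵀ ∈ Matrix.orthogonalGroup (Fin d) ℝ := by
  rw [← star_eq_transpose']; exact Unitary.star_mem h

lemma OG_tmul {A : Matrix (Fin d) (Fin d) ℝ} (h : A ∈ Matrix.orthogonalGroup (Fin d) ℝ) :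
    Aᵀ * A = 1 := by
  have := h.1
  rwa [star_eq_transpose'] at this

lemma transport_mem (G : SimpleGraph V) (F : V → V → Matrix (Fin d) (Fin d) ℝ)
    (horth : ∀ v u : V, G.Adj v u → F v u ∈ Matrix.orthogonalGroup (Fin d) ℝ) :
    ∀ l : List V, l.Chain' G.Adj → transport F l ∈ Matrix.orthogonalGroup (Fin d) ℝ
  | [], _ => by simpa [transport] using one_mem _
  | [_], _ => by simpa [transport] using one_mem _
  | a :: b :: rest, hc => by
      rw [List.Chain', List.isChain_cons_cons] at hc
      have ih := transport_mem G F horth (b :: rest) hc.2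
      have h1 := horth a b hc.1
      have h2 := transpose_mem_OG (horth b a hc.1.symm)
      simpa [transport] using mul_mem ih (mul_mem h2 h1)

lemma transport_append_last (F : V → V → Matrix (Fin d) (Fin d) ℝ) (v : V) :
    ∀ (l : List V) (u : V), l.getLast? = some u →
      transport F (l ++ [v]) = ((F v u)ᵀ * F u v) * transport F l
  | [], u, h => by simp at h
  | [a], u, h => by
      simp only [List.getLast?_singleton, Option.some.injEq] at h
      subst h; simp [transport]
  | a :: b :: rest, u, h => by
      have h' : (b :: rest).getLast? = some u := by
        rwa [List.getLast?_cons_cons] at h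
      have ih := transport_append_last F v (b :: rest) u h'
      show transport F (a :: b :: (rest ++ [v])) = _
      rw [show transport F (a :: b :: (rest ++ [v]))
            = transport F (b :: (rest ++ [v])) * ((F b a)ᵀ * F a b) from rfl]
      rw [show (b :: (rest ++ [v])) = (b :: rest) ++ [v] from rfl, ih]
      rw [show transport F (a :: b :: rest) = transport F (b :: rest) * ((F b a)ᵀ * F a b) from rfl]
      rw [Matrix.mul_assoc]

lemma mulVec_self_dot {T : Matrix (Fin d) (Fin d) ℝ} (h : Tᵀ * T = 1) (y : Fin d → ℝ) :
    (T *ᵥ y) ⬝ᵥ (T *ᵥ y) = y ⬝ᵥ y := by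
  rw [Matrix.dotProduct_mulVec, ← Matrix.mulVec_transpose, Matrix.mulVec_mulVec, h,
    Matrix.one_mulVec]

end aux

/-- For a discrete `O(d)`-bundle on a connected graph, if `r` bounds the
(operator-norm) deviation `‖P^γ_{v→u} − P^{γ'}_{v→u}‖` over all pairs of nodes and all
pairs of paths between them, then the smallest eigenvalue of the normalised sheaf
Laplacian — the minimum of the Rayleigh quotient `⟨x, Δ_F x⟩ / ‖x‖²` over `x ≠ 0` —
is at most `r² / 2`.  (The conclusion is stated as the existence of a nonzero vector
whose Rayleigh quotient is at most `r²/2`.) -/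
theorem spectral_gap_le_transport_deviation {V : Type*} [Fintype V] [DecidableEq V] (G : SimpleGraph V)
    [DecidableRel G.Adj] (hconn : G.Connected) {d : ℕ} (hd : 0 < d)
    (F : V → V → Matrix (Fin d) (Fin d) ℝ)
    (horth : ∀ v u : V, G.Adj v u → F v u ∈ Matrix.orthogonalGroup (Fin d) ℝ)
    (r : ℝ) (hr0 : 0 ≤ r)
    (hr : ∀ (v u : V) (γ γ' : List V), IsPathFrom G γ v u → IsPathFrom G γ' v u →
      ∀ y : Fin d → ℝ,
        ((transport F γ - transport F γ').mulVec y) ⬝ᵥ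
          ((transport F γ - transport F γ').mulVec y) ≤ r ^ 2 * (y ⬝ᵥ y)) :
    ∃ x : V × Fin d → ℝ, x ≠ 0 ∧
      x ⬝ᵥ (normSheafLaplacian G F).mulVec x ≤ r ^ 2 / 2 * (x ⬝ᵥ x) := by
  classical
  obtain ⟨v₀⟩ := hconn.nonempty
  by_cases hdeg : ∀ v : V, 0 < G.degree v
  · -- main case: every vertex has positive degree
    set y : Fin d → ℝ := Pi.single (⟨0, hd⟩ : Fin d) 1 with hy
    have hyy : y ⬝ᵥ y = 1 := by
      simp [hy, dotProduct, Pi.single_apply]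
    have hwalk : ∀ v : V, ∃ l : List V, IsPathFrom G l v₀ v := by
      intro v
      obtain ⟨w⟩ := hconn.preconnected v₀ v
      refine ⟨w.support, ?_, ?_, w.isChain_adj_support⟩
      · rw [List.head?_eq_head w.support_ne_nil]
        exact congrArg some w.head_support
      · rw [List.getLast?_eq_getLast w.support_ne_nil]
        exact congrArg some w.getLast_support
    choose γ hγ using hwalk
    set z : V → Fin d → ℝ := fun v => (transport F (γ v)) *ᵥ y with hz
    have htr : ∀ v, (transport F (γ v))ᵀ * transport F (γ v) = 1 := fun v =>
      OG_tmul (transport_mem G F horth _ (hγ v).2.2)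
    have hzz : ∀ v, z v ⬝ᵥ z v = 1 := fun v => by
      rw [hz]; dsimp only; rw [mulVec_self_dot (htr v) y, hyy]
    set x : V × Fin d → ℝ := fun p => Real.sqrt (G.degree p.1) * z p.1 p.2 with hx
    have hsq : ∀ v : V, Real.sqrt (G.degree v) * Real.sqrt (G.degree v) = (G.degree v : ℝ) :=
      fun v => Real.mul_self_sqrt (Nat.cast_nonneg _)
    have hs0 : ∀ v : V, Real.sqrt (G.degree v) ≠ 0 := fun v =>
      ne_of_gt (Real.sqrt_pos.mpr (by exact_mod_cast hdeg v))
    set t : V → V → ℝ := fun v u => z v ⬝ᵥ z v - z v ⬝ᵥ (((F v u)ᵀ * F u v) *ᵥ z u) with ht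
    have hQsplit : x ⬝ᵥ (normSheafLaplacian G F).mulVec x
        = ∑ v, ∑ u, ∑ i, ∑ j, x (v, i) * (normSheafLaplacian G F (v, i) (u, j) * x (u, j)) := by
      rw [dotProduct, Fintype.sum_prod_type]
      refine Finset.sum_congr rfl fun v _ => ?_
      rw [← Finset.sum_comm]
      refine Finset.sum_congr rfl fun i _ => ?_
      simp only [Matrix.mulVec, dotProduct]
      rw [Finset.mul_sum, Fintype.sum_prod_type]
    have hblock : ∀ v u : V,
        (∑ i, ∑ j, x (v, i) * (normSheafLaplacian G F (v, i) (u, j) * x (u, j)))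
        = (if v = u then (G.degree v : ℝ) * (z v ⬝ᵥ z v) else 0)
          + (if G.Adj v u then -(z v ⬝ᵥ (((F v u)ᵀ * F u v) *ᵥ z u)) else 0) := by
      intro v u
      have hterm : ∀ (E : Matrix (Fin d) (Fin d) ℝ),
          (∑ i, ∑ j, x (v, i) * (E i j / (Real.sqrt (G.degree v) * Real.sqrt (G.degree u))
              * x (u, j)))
          = z v ⬝ᵥ (E *ᵥ z u) := by
        intro E
        have step : ∀ i j, x (v, i) * (E i j / (Real.sqrt (G.degree v) * Real.sqrt (G.degree u))
            * x (u, j)) = z v i * (E i j * z u j) := by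
          intro i j
          simp only [hx]
          field_simp [hs0 v, hs0 u]
        simp_rw [step]
        rw [dotProduct]
        refine Finset.sum_congr rfl fun i _ => ?_
        rw [← Finset.mul_sum]
        congr 1
      by_cases hvu : v = u
      · subst hvu
        have hE : (∑ w ∈ G.neighborFinset v, (F v w)ᵀ * F v w)
            = (G.degree v : ℝ) • (1 : Matrix (Fin d) (Fin d) ℝ) := by
          have h1 : ∀ w ∈ G.neighborFinset v,
              (F v w)ᵀ * F v w = (1 : Matrix (Fin d) (Fin d) ℝ) := fun w hw =>
            OG_tmul (horth v w (by simpa using hw))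
          rw [Finset.sum_congr rfl h1, Finset.sum_const,
            SimpleGraph.card_neighborFinset_eq_degree, Nat.cast_smul_eq_nsmul]
        have : ∀ i j : Fin d, normSheafLaplacian G F (v, i) (v, j)
            = (∑ w ∈ G.neighborFinset v, (F v w)ᵀ * F v w) i j
              / (Real.sqrt (G.degree v) * Real.sqrt (G.degree v)) := by
          intro i j
          simp [normSheafLaplacian]
        simp_rw [this]
        rw [hterm, hE, Matrix.smul_mulVec, Matrix.one_mulVec, dotProduct_smul,
          smul_eq_mul]
        simp [G.irrefl]
      · by_cases hadj : G.Adj v u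
        · have : ∀ i j : Fin d, normSheafLaplacian G F (v, i) (u, j)
              = (-(((F v u)ᵀ * F u v))) i j
                / (Real.sqrt (G.degree v) * Real.sqrt (G.degree u)) := by
            intro i j
            simp [normSheafLaplacian, hvu, hadj]
          simp_rw [this]
          rw [hterm, Matrix.neg_mulVec, dotProduct_neg, if_neg hvu, if_pos hadj, zero_add]
        · have : ∀ i j : Fin d, normSheafLaplacian G F (v, i) (u, j)
              = (0 : Matrix (Fin d) (Fin d) ℝ) i j
                / (Real.sqrt (G.degree v) * Real.sqrt (G.degree u)) := by
            intro i j
            simp [normSheafLaplacian, hvu, hadj]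
          simp_rw [this]
          rw [hterm, Matrix.zero_mulVec, dotProduct_zero, if_neg hvu, if_neg hadj, add_zero]
    have hQ : x ⬝ᵥ (normSheafLaplacian G F).mulVec x = ∑ v, ∑ u ∈ G.neighborFinset v, t v u := by
      rw [hQsplit]
      refine Finset.sum_congr rfl fun v _ => ?_
      rw [Finset.sum_congr rfl fun u _ => hblock v u]
      rw [Finset.sum_add_distrib, Finset.sum_ite_eq, if_pos (Finset.mem_univ v)]
      rw [SimpleGraph.neighborFinset_eq_filter, Finset.sum_filter]
      have hsplit : ∀ u : V, (if G.Adj v u then t v u else 0)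
          = (if G.Adj v u then z v ⬝ᵥ z v else 0)
            + (if G.Adj v u then -(z v ⬝ᵥ (((F v u)ᵀ * F u v) *ᵥ z u)) else 0) := by
        intro u
        simp only [ht]
        split <;> ring
      rw [Finset.sum_congr rfl fun u _ => hsplit u, Finset.sum_add_distrib]
      congr 1
      rw [Finset.sum_ite, Finset.sum_const_zero, add_zero, Finset.sum_const,
        ← SimpleGraph.neighborFinset_eq_filter, SimpleGraph.card_neighborFinset_eq_degree,
        nsmul_eq_mul]
    have hsymm : (∑ v, ∑ u ∈ G.neighborFinset v, t v u)
        = ∑ v, ∑ u ∈ G.neighborFinset v, t u v := by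
      simp_rw [SimpleGraph.neighborFinset_eq_filter, Finset.sum_filter]
      rw [Finset.sum_comm]
      exact Finset.sum_congr rfl fun a _ => Finset.sum_congr rfl fun b _ => by
        simp only [G.adj_comm b a]
    have hbound : ∀ v u : V, G.Adj v u → t v u + t u v ≤ r ^ 2 := by
      intro v u hadj
      have hSmem : ((F v u)ᵀ * F u v) ∈ Matrix.orthogonalGroup (Fin d) ℝ :=
        mul_mem (transpose_mem_OG (horth v u hadj)) (horth u v hadj.symm)
      have hSt : ((F v u)ᵀ * F u v)ᵀ = (F u v)ᵀ * F v u := by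
        rw [Matrix.transpose_mul, Matrix.transpose_transpose]
      have e1 : (((F v u)ᵀ * F u v) *ᵥ z u) ⬝ᵥ (((F v u)ᵀ * F u v) *ᵥ z u) = z u ⬝ᵥ z u :=
        mulVec_self_dot (OG_tmul hSmem) _
      have e2 : z u ⬝ᵥ (((F u v)ᵀ * F v u) *ᵥ z v) = z v ⬝ᵥ (((F v u)ᵀ * F u v) *ᵥ z u) := by
        rw [← hSt, Matrix.dotProduct_mulVec, Matrix.vecMul_transpose, dotProduct_comm]
      have heq : t v u + t u v
          = (z v - ((F v u)ᵀ * F u v) *ᵥ z u) ⬝ᵥ (z v - ((F v u)ᵀ * F u v) *ᵥ z u) := by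
        simp_rw [ht]
        rw [sub_dotProduct, dotProduct_sub, dotProduct_sub, e1, e2]
        have := dotProduct_comm (((F v u)ᵀ * F u v) *ᵥ z u) (z v)
        linarith
      have hγu := hγ u
      have hpath : IsPathFrom G (γ u ++ [v]) v₀ v := by
        obtain ⟨h1, h2, h3⟩ := hγu
        refine ⟨?_, ?_, ?_⟩
        · cases hγl : γ u with
          | nil => rw [hγl] at h1; simp at h1
          | cons a l => rw [hγl] at h1; simpa using h1
        · rw [List.getLast?_concat]
        · rw [List.Chain', List.isChain_append]
          refine ⟨h3, List.isChain_singleton _, ?_⟩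
          intro a ha b hb
          rw [h2] at ha
          simp only [Option.mem_def, Option.some.injEq, List.head?_cons] at ha hb
          subst ha; subst hb
          exact hadj.symm
      have hTapp : transport F (γ u ++ [v]) = ((F v u)ᵀ * F u v) * transport F (γ u) :=
        transport_append_last F v (γ u) u (hγ u).2.1
      have hdiff : z v - ((F v u)ᵀ * F u v) *ᵥ z u
          = (transport F (γ v) - transport F (γ u ++ [v])) *ᵥ y := by
        rw [hz]; dsimp only
        rw [Matrix.mulVec_mulVec, hTapp, Matrix.sub_mulVec]
      calc t v u + t u v
          = (z v - ((F v u)ᵀ * F u v) *ᵥ z u) ⬝ᵥ (z v - ((F v u)ᵀ * F u v) *ᵥ z u) := heq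
        _ = ((transport F (γ v) - transport F (γ u ++ [v])) *ᵥ y) ⬝ᵥ
              ((transport F (γ v) - transport F (γ u ++ [v])) *ᵥ y) := by rw [hdiff]
        _ ≤ r ^ 2 * (y ⬝ᵥ y) := hr v₀ v (γ v) (γ u ++ [v]) (hγ v) hpath y
        _ = r ^ 2 := by rw [hyy, mul_one]
    have hxx : x ⬝ᵥ x = ∑ v, (G.degree v : ℝ) := by
      rw [dotProduct, Fintype.sum_prod_type]
      refine Finset.sum_congr rfl fun v _ => ?_
      have step : ∀ i : Fin d, x (v, i) * x (v, i) = (G.degree v : ℝ) * (z v i * z v i) := by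
        intro i
        simp only [hx]
        rw [show (Real.sqrt (G.degree v) * z v i) * (Real.sqrt (G.degree v) * z v i)
              = (Real.sqrt (G.degree v) * Real.sqrt (G.degree v)) * (z v i * z v i) from by ring,
          hsq v]
      rw [Finset.sum_congr rfl fun i _ => step i, ← Finset.mul_sum]
      rw [show (∑ i, z v i * z v i) = z v ⬝ᵥ z v from rfl, hzz v, mul_one]
    have key : 2 * (x ⬝ᵥ (normSheafLaplacian G F).mulVec x) ≤ r ^ 2 * (x ⬝ᵥ x) := by
      have h2Q : 2 * (x ⬝ᵥ (normSheafLaplacian G F).mulVec x)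
          = ∑ v, ∑ u ∈ G.neighborFinset v, (t v u + t u v) := by
        rw [hQ, two_mul]
        nth_rewrite 2 [hsymm]
        rw [← Finset.sum_add_distrib]
        exact Finset.sum_congr rfl fun v _ => (Finset.sum_add_distrib).symm
      rw [h2Q, hxx]
      calc (∑ v, ∑ u ∈ G.neighborFinset v, (t v u + t u v))
          ≤ ∑ v, ∑ u ∈ G.neighborFinset v, r ^ 2 :=
            Finset.sum_le_sum fun v _ => Finset.sum_le_sum fun u hu =>
              hbound v u (by simpa using hu)
        _ = ∑ v, (G.degree v : ℝ) * r ^ 2 := by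
            refine Finset.sum_congr rfl fun v _ => ?_
            rw [Finset.sum_const, SimpleGraph.card_neighborFinset_eq_degree, nsmul_eq_mul]
        _ = r ^ 2 * ∑ v, (G.degree v : ℝ) := by
            rw [← Finset.sum_mul, mul_comm]
    refine ⟨x, ?_, by linarith⟩
    intro h0
    have h1 := hzz v₀
    obtain ⟨i, hi⟩ : ∃ i, z v₀ i ≠ 0 := by
      by_contra hc
      push_neg at hc
      have : z v₀ ⬝ᵥ z v₀ = 0 := by
        rw [dotProduct]
        exact Finset.sum_eq_zero fun i _ => by rw [hc i]; ring
      rw [this] at h1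
      norm_num at h1
    have h2 := congrFun h0 (v₀, i)
    simp only [hx, Pi.zero_apply] at h2
    exact (mul_ne_zero (hs0 v₀) hi) h2
  · -- degenerate case: some vertex has degree 0, so the graph is a single vertex
    push_neg at hdeg
    obtain ⟨v, hv⟩ := hdeg
    rw [Nat.le_zero] at hv
    have hall : ∀ u : V, u = v := by
      intro u
      obtain ⟨w⟩ := hconn.preconnected v u
      cases w with
      | nil => rfl
      | cons h p =>
        exact absurd ((G.degree_pos_iff_exists_adj v).mpr ⟨_, h⟩) (by omega)
    have hM : ∀ p q : V × Fin d, normSheafLaplacian G F p q = 0 := by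
      intro p q
      have hN : G.neighborFinset p.1 = ∅ := by
        rw [← Finset.card_eq_zero, SimpleGraph.card_neighborFinset_eq_degree, hall p.1, hv]
      have h1 : p.1 = q.1 := (hall p.1).trans (hall q.1).symm
      simp [normSheafLaplacian, h1, hN]
    refine ⟨Pi.single (v, (⟨0, hd⟩ : Fin d)) 1, ?_, ?_⟩
    · intro h
      have := congrFun h (v, ⟨0, hd⟩)
      simp at this
    · have hmv : (normSheafLaplacian G F).mulVec (Pi.single (v, (⟨0, hd⟩ : Fin d)) 1) = 0 := by
        ext p
        simp [Matrix.mulVec, dotProduct, hM]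
      rw [hmv, dotProduct_zero]
      have h2 : (0:ℝ) ≤ (Pi.single (v, (⟨0, hd⟩ : Fin d)) (1:ℝ)) ⬝ᵥ
          (Pi.single (v, (⟨0, hd⟩ : Fin d)) 1) :=
        Finset.sum_nonneg fun i _ => mul_self_nonneg _
      have h3 : (0:ℝ) ≤ r ^ 2 / 2 := by positivity
      exact mul_nonneg h3 h2
end

section
/- If the transport maps of a discrete O(d)-bundle over a connected graph are path-independent (any two paths between the same pair of nodes induce the same transport map), then the normalised sheaf Laplacian has a non-trivial kernel, i.e. its smallest eigenvalue is 0. -/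
open Matrix BigOperators

lemma transport_append {V : Type*} {d : ℕ} (F : V → V → Matrix (Fin d) (Fin d) ℝ) :
    ∀ (γ : List V) (v u : V), γ.getLast? = some v →
      transport F (γ ++ [u]) = ((F u v)ᵀ * F v u) * transport F γ
  | [], v, u, h => by simp at h
  | [a], v, u, h => by
      simp at h
      subst h
      simp [transport]
  | a :: b :: rest, v, u, h => by
      have h' : (b :: rest).getLast? = some v := by
        rw [← h]; rfl
      have ih := transport_append F (b :: rest) v u h'
      show transport F (a :: ((b :: rest) ++ [u])) = _
      rw [show a :: ((b :: rest) ++ [u]) = a :: b :: (rest ++ [u]) from rfl]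
      rw [transport, show b :: (rest ++ [u]) = (b :: rest) ++ [u] from rfl, ih,
        transport, mul_assoc]

lemma transpose_mem_orth {d : ℕ} {M : Matrix (Fin d) (Fin d) ℝ}
    (h : M ∈ Matrix.orthogonalGroup (Fin d) ℝ) :
    Mᵀ ∈ Matrix.orthogonalGroup (Fin d) ℝ := by
  have h2 := Unitary.star_mem h
  have : star M = Mᵀ := by
    ext i j; simp [Matrix.star_eq_conjTranspose, Matrix.conjTranspose_apply]
  rwa [this] at h2

lemma orth_transpose_mul {d : ℕ} {M : Matrix (Fin d) (Fin d) ℝ}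
    (h : M ∈ Matrix.orthogonalGroup (Fin d) ℝ) : Mᵀ * M = 1 := by
  have := (Matrix.mem_orthogonalGroup_iff' (Fin d) ℝ).mp h
  have hs : star M = Mᵀ := by
    ext i j; simp [Matrix.star_eq_conjTranspose, Matrix.conjTranspose_apply]
  exact this

lemma transport_mem_orth {V : Type*} (G : SimpleGraph V) {d : ℕ}
    (F : V → V → Matrix (Fin d) (Fin d) ℝ)
    (horth : ∀ v u : V, G.Adj v u → F v u ∈ Matrix.orthogonalGroup (Fin d) ℝ) :
    ∀ γ : List V, γ.Chain' G.Adj → transport F γ ∈ Matrix.orthogonalGroup (Fin d) ℝ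
  | [], _ => by simp [transport]
  | [a], _ => by simp [transport]
  | a :: b :: rest, h => by
      have hab : G.Adj a b := (List.isChain_cons_cons.mp h).1
      have htail : (b :: rest).Chain' G.Adj := (List.isChain_cons_cons.mp h).2
      have ih := transport_mem_orth G F horth (b :: rest) htail
      rw [transport]
      exact mul_mem ih (mul_mem (transpose_mem_orth (horth b a hab.symm)) (horth a b hab))

set_option maxRecDepth 10000 in
/-- If the transport maps of a discrete `O(d)`-bundle over a connected
graph are path-independent, then the normalised sheaf Laplacian has a non-trivial kernel
(equivalently, its smallest eigenvalue is `0`). -/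
theorem nontrivial_kernel_of_path_independent {V : Type*} [Fintype V] [DecidableEq V]
    (G : SimpleGraph V) [DecidableRel G.Adj] (hconn : G.Connected) {d : ℕ} (hd : 0 < d)
    (F : V → V → Matrix (Fin d) (Fin d) ℝ)
    (horth : ∀ v u : V, G.Adj v u → F v u ∈ Matrix.orthogonalGroup (Fin d) ℝ)
    (hpi : ∀ (v u : V) (γ γ' : List V), IsPathFrom G γ v u → IsPathFrom G γ' v u →
      transport F γ = transport F γ') :
    ∃ x : V × Fin d → ℝ, x ≠ 0 ∧ (normSheafLaplacian G F).mulVec x = 0 := by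
  classical
  obtain ⟨v₀⟩ := hconn.nonempty
  by_cases hdeg : ∀ v : V, 0 < G.degree v
  · -- main case
    set p : ∀ v : V, G.Walk v₀ v := fun v => (hconn v₀ v).some with hp
    set γ : V → List V := fun v => (p v).support with hγ
    have hpath : ∀ v, IsPathFrom G (γ v) v₀ v := by
      intro v
      refine ⟨?_, ?_, (p v).isChain_adj_support⟩
      · rw [show γ v = (p v).support from rfl, (p v).support_eq_cons]; rfl
      · rw [List.getLast?_eq_getLast (by simp [hγ]), (p v).getLast_support]
    have hlast : ∀ v, (γ v).getLast? = some v := fun v => (hpath v).2.1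
    set e₀ : Fin d → ℝ := Pi.single ⟨0, hd⟩ 1 with he₀
    set y : V → Fin d → ℝ := fun v => (transport F (γ v)).mulVec e₀ with hy
    have hedge : ∀ v u : V, G.Adj v u → y u = ((F u v)ᵀ * F v u).mulVec (y v) := by
      intro v u hadj
      have h1 : IsPathFrom G (γ v ++ [u]) v₀ u := by
        refine ⟨?_, ?_, ?_⟩
        · rw [List.head?_append_of_ne_nil _ (by simp [hγ])]
          exact (hpath v).1
        · simp [List.getLast?_concat]
        · show List.IsChain G.Adj (γ v ++ [u]); rw [List.isChain_append]
          refine ⟨(hpath v).2.2, List.isChain_singleton u, ?_⟩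
          intro a ha b hb
          rw [hlast v] at ha
          simp at ha hb
          rw [← ha, ← hb]; exact hadj
      have hT := hpi v₀ u (γ u) (γ v ++ [u]) (hpath u) h1
      rw [hy]
      simp only
      rw [hT, transport_append F (γ v) v u (hlast v), ← Matrix.mulVec_mulVec]
    set x : V × Fin d → ℝ := fun q => Real.sqrt (G.degree q.1) * y q.1 q.2 with hx
    have hsq : ∀ v : V, (0:ℝ) < Real.sqrt (G.degree v) := fun v =>
      Real.sqrt_pos.mpr (by exact_mod_cast hdeg v)
    have hDD : ∀ v : V, Real.sqrt (G.degree v) * Real.sqrt (G.degree v) = (G.degree v : ℝ) :=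
      fun v => Real.mul_self_sqrt (by positivity)
    have hyv₀ : y v₀ ≠ 0 := by
      intro h0
      have hm := orth_transpose_mul (transport_mem_orth G F horth (γ v₀) (hpath v₀).2.2)
      have he : e₀ = 0 := by
        have := congrArg (fun w => (transport F (γ v₀))ᵀ.mulVec w) h0
        simpa [hy, Matrix.mulVec_mulVec, hm] using this
      have := congrFun he ⟨0, hd⟩
      simp [he₀] at this
    refine ⟨x, ?_, ?_⟩
    · intro h0
      apply hyv₀
      funext i
      have h1 := congrFun h0 (v₀, i)
      simp only [hx, Pi.zero_apply] at h1
      exact (mul_eq_zero.mp h1).resolve_left (ne_of_gt (hsq v₀))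
    · funext q
      obtain ⟨v, i⟩ := q
      show ∑ q : V × Fin d, normSheafLaplacian G F (v, i) q * x q = 0
      rw [Fintype.sum_prod_type]
      have key : ∀ u : V, (∑ j, normSheafLaplacian G F (v, i) (u, j) * x (u, j)) =
          if u = v then Real.sqrt (G.degree v) * y v i
          else if G.Adj v u then -(y v i) / Real.sqrt (G.degree v) else 0 := by
        intro u
        by_cases huv : u = v
        · subst huv
          rw [if_pos rfl]
          have hsum : (∑ w ∈ G.neighborFinset u, (F u w)ᵀ * F u w)
              = (G.degree u : ℝ) • (1 : Matrix (Fin d) (Fin d) ℝ) := by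
            rw [Finset.sum_congr rfl
              (fun w hw => orth_transpose_mul (horth u w ((G.mem_neighborFinset u w).mp hw)))]
            rw [Finset.sum_const, SimpleGraph.card_neighborFinset_eq_degree]
            exact (Nat.cast_smul_eq_nsmul ℝ _ _).symm
          simp only [normSheafLaplacian, hx, if_pos rfl, hsum, Matrix.smul_apply,
            Matrix.one_apply, smul_eq_mul, mul_ite, mul_one, mul_zero]
          rw [Finset.sum_eq_single i]
          · have hne : (G.degree u : ℝ) ≠ 0 := by exact_mod_cast (hdeg u).ne'
            rw [if_pos rfl, div_mul_eq_mul_div, hDD u, if_pos trivial,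
              mul_div_cancel_left₀ _ hne]
          · intro j _ hj
            rw [if_neg (Ne.symm hj)]
            simp
          · intro h; exact absurd (Finset.mem_univ i) h
        · rw [if_neg huv]
          by_cases hadj : G.Adj v u
          · rw [if_pos hadj]
            have hT : y v = ((F v u)ᵀ * F u v).mulVec (y u) := hedge u v hadj.symm
            have hterm : ∀ j : Fin d, normSheafLaplacian G F (v, i) (u, j) * x (u, j)
                = -(((F v u)ᵀ * F u v) i j * y u j) / Real.sqrt (G.degree v) := by
              intro j
              simp only [normSheafLaplacian, hx]
              rw [if_neg (Ne.symm huv), if_pos hadj]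
              rw [div_mul_eq_mul_div,
                div_eq_div_iff (mul_pos (hsq v) (hsq u)).ne' (ne_of_gt (hsq v))]
              ring
            rw [Finset.sum_congr rfl (fun j _ => hterm j)]
            rw [← Finset.sum_div, Finset.sum_neg_distrib]
            congr 1
            rw [neg_inj]
            show (∑ j, ((F v u)ᵀ * F u v) i j * y u j) = y v i
            rw [hT]
            rfl
          · rw [if_neg hadj]
            apply Finset.sum_eq_zero
            intro j _
            simp only [normSheafLaplacian, hx]
            rw [if_neg (Ne.symm huv), if_neg hadj]
            simp
      rw [Finset.sum_congr rfl (fun u _ => key u)]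
      rw [← Finset.add_sum_erase _ _ (Finset.mem_univ v), if_pos rfl]
      have h2 : ∑ u ∈ Finset.univ.erase v,
          (if u = v then Real.sqrt (G.degree v) * y v i
           else if G.Adj v u then -(y v i) / Real.sqrt (G.degree v) else 0)
          = ∑ u ∈ Finset.univ.erase v,
            (if G.Adj v u then -(y v i) / Real.sqrt (G.degree v) else 0) :=
        Finset.sum_congr rfl (fun u hu => by rw [if_neg (Finset.ne_of_mem_erase hu)])
      rw [h2, Finset.sum_erase _ (by simp), ← Finset.sum_filter,
        ← SimpleGraph.neighborFinset_eq_filter, Finset.sum_const,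
        SimpleGraph.card_neighborFinset_eq_degree, nsmul_eq_mul]
      have hne : Real.sqrt ((G.degree v : ℝ)) ≠ 0 := ne_of_gt (hsq v)
      field_simp
      linear_combination (y v i) * hDD v
  · push_neg at hdeg
    obtain ⟨w, hw⟩ := hdeg
    have hw0 : G.degree w = 0 := by omega
    have hall : ∀ u : V, u = w := by
      intro u
      obtain ⟨q⟩ := hconn w u
      cases q with
      | nil => rfl
      | cons h _ =>
          exact absurd ((G.degree_pos_iff_exists_adj w).mpr ⟨_, h⟩) (by omega)
    have hN : G.neighborFinset w = ∅ := by
      rw [← Finset.card_eq_zero, G.card_neighborFinset_eq_degree]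
      exact hw0
    have hΔ : normSheafLaplacian G F = 0 := by
      ext q r
      simp only [normSheafLaplacian]
      rw [hall q.1, hall r.1, hN, if_pos rfl, Finset.sum_empty, Matrix.zero_apply, zero_div]
      rfl
    refine ⟨fun _ => 1, ?_, ?_⟩
    · intro h; exact one_ne_zero (congrFun h (w, ⟨0, hd⟩))
    · rw [hΔ]
      exact Matrix.zero_mulVec _
end

section
/- For a graph G, the set of normalised sheaf Laplacians arising from sheaves in H¹_sym (one-dimensional stalks, symmetric non-zero restriction maps F_{v⊴e} = F_{u⊴e} ≠ 0) coincides with the set of normalised weighted graph Laplacians over G with strictly positive edge weights. -/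
open Matrix BigOperators

/-- The normalised sheaf Laplacian `Δ_F = D^{-1/2} L_F D^{-1/2}` of a sheaf with
one-dimensional stalks on a graph `G`, where `F v u` is the scalar restriction map
`F_{v ⊴ e}` for the edge `e = (v,u)`.  Off-diagonal entries are `-F_{v⊴e} F_{u⊴e}`,
diagonal entries are `Σ_{v⊴e} F_{v⊴e}²`, normalised by the square roots of the
diagonal (weighted degrees). -/
noncomputable def normSheafLaplacian1 {V : Type*} [Fintype V] [DecidableEq V]
    (G : SimpleGraph V) [DecidableRel G.Adj] (F : V → V → ℝ) : Matrix V V ℝ :=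
  fun v u =>
    (if v = u then ∑ w ∈ G.neighborFinset v, (F v w) ^ 2
     else if G.Adj v u then -(F v u * F u v) else 0)
    / (Real.sqrt (∑ w ∈ G.neighborFinset v, (F v w) ^ 2) *
       Real.sqrt (∑ w ∈ G.neighborFinset u, (F u w) ^ 2))

/-- The normalised weighted graph Laplacian `D^{-1/2}(D − W)D^{-1/2}` of a weight
matrix `W`, where `D` is the diagonal matrix of weighted degrees. -/
noncomputable def normWeightedLaplacian {V : Type*} [Fintype V] [DecidableEq V]
    (W : Matrix V V ℝ) : Matrix V V ℝ :=
  fun v u =>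
    ((if v = u then ∑ w, W v w else 0) - W v u)
    / (Real.sqrt (∑ w, W v w) * Real.sqrt (∑ w, W u w))

lemma sum_neighborFinset_eq {V : Type*} [Fintype V] [DecidableEq V]
    (G : SimpleGraph V) [DecidableRel G.Adj] (v : V) (f : V → ℝ) :
    ∑ w ∈ G.neighborFinset v, f w = ∑ w, (if G.Adj v w then f w else 0) := by
  rw [SimpleGraph.neighborFinset_eq_filter, Finset.sum_filter]

/-- For a graph `G`, the set of normalised sheaf Laplacians arising from
sheaves in `H¹_sym` (one-dimensional stalks, symmetric non-zero restriction maps) coincides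
with the set of normalised weighted graph Laplacians over `G` with strictly positive edge
weights. -/
theorem normSheafLaplacians_H1sym_eq_weightedLaplacians {V : Type*} [Fintype V]
    [DecidableEq V] (G : SimpleGraph V) [DecidableRel G.Adj] :
    {M : Matrix V V ℝ | ∃ F : V → V → ℝ,
        (∀ v u : V, G.Adj v u → F v u = F u v ∧ F v u ≠ 0) ∧
        M = normSheafLaplacian1 G F} =
      {M : Matrix V V ℝ | ∃ W : Matrix V V ℝ, Wᵀ = W ∧
        (∀ v u : V, (G.Adj v u → 0 < W v u) ∧ (¬ G.Adj v u → W v u = 0)) ∧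
        M = normWeightedLaplacian W} := by
  ext M
  simp only [Set.mem_setOf_eq]
  constructor
  · rintro ⟨F, hF, rfl⟩
    set W : Matrix V V ℝ := fun v u => if G.Adj v u then F v u * F u v else 0 with hW
    have key : ∀ v, ∑ w ∈ G.neighborFinset v, (F v w) ^ 2 = ∑ w, W v w := by
      intro v
      rw [sum_neighborFinset_eq]
      refine Finset.sum_congr rfl fun w _ => ?_
      by_cases h : G.Adj v w
      · simp [hW, h, (hF v w h).1, sq]
      · simp [hW, h]
    refine ⟨W, ?_, ?_, ?_⟩
    · ext v u
      by_cases h : G.Adj v u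
      · rw [Matrix.transpose_apply]
        simp [hW, Matrix.transpose_apply, h, h.symm, mul_comm]
      · have h' : ¬ G.Adj u v := fun h' => h (G.adj_symm h')
        rw [Matrix.transpose_apply]
        simp [hW, Matrix.transpose_apply, h, h']
    · intro v u
      refine ⟨fun h => ?_, fun h => by simp [hW, h]⟩
      have h1 := (hF v u h).1
      have h2 := (hF v u h).2
      simp only [hW, if_pos h, ← h1]
      exact mul_self_pos.mpr h2
    · ext v u
      simp only [normSheafLaplacian1, normWeightedLaplacian, key]
      congr 1
      by_cases hvu : v = u
      · subst hvu
        simp [hW, G.irrefl]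
      · by_cases h : G.Adj v u
        · simp [hvu, hW, h]
        · simp [hvu, hW, h]
  · rintro ⟨W, hWsym, hWpos, rfl⟩
    refine ⟨fun v u => Real.sqrt (W v u), fun v u h => ?_, ?_⟩
    · have hsym : W u v = W v u := congrFun (congrFun hWsym v) u
      exact ⟨by simp only [hsym], by
        have := (hWpos v u).1 h
        positivity⟩
    · have key : ∀ v, ∑ w ∈ G.neighborFinset v, (Real.sqrt (W v w)) ^ 2 = ∑ w, W v w := by
        intro v
        rw [sum_neighborFinset_eq]
        refine Finset.sum_congr rfl fun w _ => ?_
        by_cases h : G.Adj v w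
        · rw [if_pos h, Real.sq_sqrt ((hWpos v w).1 h).le]
        · rw [if_neg h, (hWpos v w).2 h]
      ext v u
      simp only [normSheafLaplacian1, normWeightedLaplacian, key]
      congr 1
      by_cases hvu : v = u
      · subst hvu
        simp [(hWpos v v).2 (G.irrefl)]
      · by_cases h : G.Adj v u
        · have hsym : W u v = W v u := congrFun (congrFun hWsym v) u
          rw [if_neg hvu, if_pos h, if_neg hvu, hsym,
            Real.mul_self_sqrt ((hWpos v u).1 h).le, zero_sub]
        · simp [hvu, h, (hWpos v u).2 h]
end

section
/- Let G = (A, B, E) be a connected bipartite graph with |A| = |B|. For any sheaf F ∈ H¹_sym over G (one-dimensional stalks with symmetric non-zero restriction maps), the unique harmonic eigenvector y of the normalised sheaf Laplacian, given by y_v = sqrt(Σ_{v⊴e} F_{v⊴e}²), cannot satisfy y_v < y_u for all v ∈ A, u ∈ B. In particular, diffusion with such a Laplacian cannot linearly separate the two partitions in the infinite-time limit for any initial conditions. -/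
open Matrix BigOperators

/-- Let `G` be a connected bipartite graph with parts `A`, `B` of equal
size.  For a sheaf in `H¹_sym` (one-dimensional stalks, symmetric non-zero restriction
maps `F v u = F u v ≠ 0` on edges), the harmonic eigenvector of the normalised sheaf
Laplacian, `y v = sqrt (Σ_{v⊴e} F_{v⊴e}²)`, cannot satisfy `y v < y u` for all
`v ∈ A`, `u ∈ B`.  (Hence diffusion cannot linearly separate the two partitions in the
infinite-time limit.) -/
theorem bipartite_H1sym_no_separation {V : Type*} [Fintype V] [DecidableEq V]
    (G : SimpleGraph V) [DecidableRel G.Adj] (hconn : G.Connected)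
    (A B : Finset V)
    (hpart : ∀ v : V, v ∈ A ↔ v ∉ B)
    (hbip : ∀ v u : V, G.Adj v u → (v ∈ A ↔ u ∈ B))
    (hcard : A.card = B.card)
    (F : V → V → ℝ)
    (hsym : ∀ v u : V, G.Adj v u → F v u = F u v)
    (hne : ∀ v u : V, G.Adj v u → F v u ≠ 0) :
    ¬ (∀ v ∈ A, ∀ u ∈ B,
        Real.sqrt (∑ w ∈ G.neighborFinset v, (F v w) ^ 2) <
          Real.sqrt (∑ w ∈ G.neighborFinset u, (F u w) ^ 2)) := by
  intro h
  set d : V → ℝ := fun v => ∑ w ∈ G.neighborFinset v, (F v w) ^ 2 with hd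
  have hlt : ∀ v ∈ A, ∀ u ∈ B, d v < d u := by
    intro v hv u hu
    by_contra hle
    push_neg at hle
    exact absurd (Real.sqrt_le_sqrt hle) (not_le.mpr (h v hv u hu))
  -- inner sums as if-sums over all vertices
  have inner : ∀ v, d v = ∑ w : V, if G.Adj v w then (F v w) ^ 2 else 0 := by
    intro v
    show ∑ w ∈ G.neighborFinset v, (F v w) ^ 2 = _
    rw [SimpleGraph.neighborFinset_eq_filter, Finset.sum_filter]
  have eA : ∑ v ∈ A, d v
      = ∑ v : V, ∑ w : V, if G.Adj v w ∧ v ∈ A then (F v w) ^ 2 else 0 := by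
    rw [show ∑ v ∈ A, d v = ∑ v : V, if v ∈ A then d v else 0 by
      rw [Finset.sum_ite_mem, Finset.univ_inter]]
    refine Finset.sum_congr rfl fun v _ => ?_
    by_cases hv : v ∈ A
    · simp [hv, inner v]
    · simp [hv]
  have eB : ∑ u ∈ B, d u
      = ∑ u : V, ∑ w : V, if G.Adj u w ∧ u ∈ B then (F u w) ^ 2 else 0 := by
    rw [show ∑ u ∈ B, d u = ∑ u : V, if u ∈ B then d u else 0 by
      rw [Finset.sum_ite_mem, Finset.univ_inter]]
    refine Finset.sum_congr rfl fun u _ => ?_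
    by_cases hu : u ∈ B
    · simp [hu, inner u]
    · simp [hu]
  have key : ∀ v w : V,
      (if G.Adj v w ∧ v ∈ A then (F v w) ^ 2 else 0)
        = (if G.Adj w v ∧ w ∈ B then (F w v) ^ 2 else 0) := by
    intro v w
    by_cases ha : G.Adj v w
    · by_cases hvA : v ∈ A
      · rw [if_pos ⟨ha, hvA⟩, if_pos ⟨ha.symm, (hbip v w ha).mp hvA⟩, hsym v w ha]
      · rw [if_neg (fun hc => hvA hc.2),
          if_neg (fun hc => hvA ((hbip v w ha).mpr hc.2))]
    · rw [if_neg (fun hc => ha hc.1), if_neg (fun hc => ha hc.1.symm)]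
  have hsumeq : ∑ v ∈ A, d v = ∑ u ∈ B, d u := by
    rw [eA, eB]
    calc ∑ v : V, ∑ w : V, (if G.Adj v w ∧ v ∈ A then (F v w) ^ 2 else 0)
        = ∑ v : V, ∑ w : V, (if G.Adj w v ∧ w ∈ B then (F w v) ^ 2 else 0) := by
          exact Finset.sum_congr rfl fun v _ => Finset.sum_congr rfl fun w _ => key v w
      _ = ∑ w : V, ∑ v : V, (if G.Adj w v ∧ w ∈ B then (F w v) ^ 2 else 0) :=
          Finset.sum_comm
  -- nonemptiness
  have hVne : Nonempty V := hconn.nonempty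
  obtain ⟨v0⟩ := hVne
  have hAne : A.Nonempty := by
    rcases Finset.eq_empty_or_nonempty A with hA | hA
    · exfalso
      have hB : B = ∅ := Finset.card_eq_zero.mp (by rw [← hcard, hA]; simp)
      have hv0 : v0 ∈ A := (hpart v0).mpr (by simp [hB])
      simp [hA] at hv0
    · exact hA
  have hBne : B.Nonempty := Finset.card_pos.mp (hcard ▸ Finset.card_pos.mpr hAne)
  obtain ⟨va, hva, hmax⟩ := A.exists_max_image d hAne
  obtain ⟨ub, hub, hmin⟩ := B.exists_min_image d hBne
  have h1 : ∑ v ∈ A, d v ≤ A.card • d va :=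
    Finset.sum_le_card_nsmul A d (d va) (fun x hx => hmax x hx)
  have h2 : B.card • d ub ≤ ∑ u ∈ B, d u :=
    Finset.card_nsmul_le_sum B d (d ub) (fun x hx => hmin x hx)
  have hAcard : (0:ℝ) < A.card := by
    exact_mod_cast Finset.card_pos.mpr hAne
  have h3 : (A.card : ℝ) * d va < (A.card : ℝ) * d ub :=
    mul_lt_mul_of_pos_left (hlt va hva ub hub) hAcard
  rw [nsmul_eq_mul] at h1 h2
  rw [hcard] at h3 h1
  linarith [hsumeq]
end

section
/- Let G be a connected graph with C ≥ 3 classes and F any sheaf with one-dimensional stalks and non-zero (invertible) restriction maps. Then the diffusion process dX/dt = −Δ_F X cannot yield limiting node features that linearly separate all C classes, for any initial conditions X(0) ∈ R^{n×f}. -/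
open Matrix BigOperators

namespace NoSepAux

variable {V : Type*} [Fintype V] [DecidableEq V]

noncomputable def deg (G : SimpleGraph V) [DecidableRel G.Adj] (F : V → V → ℝ) (v : V) : ℝ :=
  ∑ w ∈ G.neighborFinset v, (F v w) ^ 2

lemma lap_eq (G : SimpleGraph V) [DecidableRel G.Adj] (F : V → V → ℝ) (v u : V) :
    normSheafLaplacian1 G F v u =
      (if v = u then deg G F v else if G.Adj v u then -(F v u * F u v) else 0)
      / (Real.sqrt (deg G F v) * Real.sqrt (deg G F u)) := rfl

lemma sum_neighbor_swap (G : SimpleGraph V) [DecidableRel G.Adj] (g : V → V → ℝ) :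
    ∑ v, ∑ u ∈ G.neighborFinset v, g v u = ∑ v, ∑ u ∈ G.neighborFinset v, g u v := by
  have h : ∀ gg : V → V → ℝ, ∑ v, ∑ u ∈ G.neighborFinset v, gg v u
      = ∑ v, ∑ u, if G.Adj v u then gg v u else 0 := by
    intro gg
    refine Finset.sum_congr rfl fun v _ => ?_
    rw [SimpleGraph.neighborFinset_eq_filter, Finset.sum_filter]
  rw [h, h, Finset.sum_comm]
  refine Finset.sum_congr rfl fun v _ => Finset.sum_congr rfl fun u _ => ?_
  by_cases hadj : G.Adj v u
  · simp [hadj, hadj.symm]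
  · have h2 : ¬ G.Adj u v := fun hh => hadj hh.symm
    simp [hadj, h2]

lemma kernel_edge (G : SimpleGraph V) [DecidableRel G.Adj] (F : V → V → ℝ)
    (hd : ∀ v, 0 < deg G F v)
    (y : V → ℝ) (hy : (normSheafLaplacian1 G F).mulVec y = 0) :
    ∀ ⦃v u⦄, G.Adj v u →
      F v u * (y v / Real.sqrt (deg G F v)) = F u v * (y u / Real.sqrt (deg G F u)) := by
  set z : V → ℝ := fun v => y v / Real.sqrt (deg G F v) with hz
  have hA : ∀ v, deg G F v * z v = ∑ u ∈ G.neighborFinset v, F v u * F u v * z u := by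
    intro v
    have h0 : ∑ u, ((if v = u then deg G F v else if G.Adj v u then -(F v u * F u v) else 0)
        / (Real.sqrt (deg G F v) * Real.sqrt (deg G F u))) * y u = 0 := by
      have h := congrFun hy v
      simpa [Matrix.mulVec, dotProduct, lap_eq] using h
    have hne0 : Real.sqrt (deg G F v) ≠ 0 := ne_of_gt (Real.sqrt_pos.2 (hd v))
    have h1 : (∑ u, (if v = u then deg G F v else if G.Adj v u then -(F v u * F u v) else 0)
        * z u) * (Real.sqrt (deg G F v))⁻¹ = 0 := by
      rw [Finset.sum_mul]
      have hcong : ∑ u, (if v = u then deg G F v else if G.Adj v u then -(F v u * F u v) else 0)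
            * z u * (Real.sqrt (deg G F v))⁻¹
          = ∑ u, ((if v = u then deg G F v else if G.Adj v u then -(F v u * F u v) else 0)
            / (Real.sqrt (deg G F v) * Real.sqrt (deg G F u))) * y u := by
        refine Finset.sum_congr rfl fun u _ => ?_
        simp only [hz]
        ring
      rw [hcong]; exact h0
    have h2 : ∑ u, (if v = u then deg G F v else if G.Adj v u then -(F v u * F u v) else 0)
        * z u = 0 := by
      rcases mul_eq_zero.1 h1 with h | h
      · exact h
      · exact absurd (inv_eq_zero.1 h) hne0
    have h3 : ∑ u, (if v = u then deg G F v else if G.Adj v u then -(F v u * F u v) else 0)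
        * z u = deg G F v * z v - ∑ u ∈ G.neighborFinset v, F v u * F u v * z u := by
      have hsplit : ∀ u ∈ Finset.univ,
          (if v = u then deg G F v else if G.Adj v u then -(F v u * F u v) else 0)
          * z u = (if v = u then deg G F v * z u else 0)
            + (if G.Adj v u then -(F v u * F u v * z u) else 0) := by
        intro u _
        by_cases h : v = u
        · subst h; simp [G.irrefl]
        · by_cases h2 : G.Adj v u <;> simp [h, h2] <;> ring
      rw [Finset.sum_congr rfl hsplit, Finset.sum_add_distrib]
      have e1 : ∑ u, (if v = u then deg G F v * z u else 0) = deg G F v * z v := by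
        simp
      have e2 : ∑ u, (if G.Adj v u then -(F v u * F u v * z u) else 0)
          = -∑ u ∈ G.neighborFinset v, F v u * F u v * z u := by
        rw [SimpleGraph.neighborFinset_eq_filter, Finset.sum_filter, ← Finset.sum_neg_distrib]
        refine Finset.sum_congr rfl fun u _ => ?_
        by_cases h : G.Adj v u <;> simp [h]
      rw [e1, e2]; ring
    have := h3 ▸ h2
    linarith
  have hT1 : ∀ v, ∑ u ∈ G.neighborFinset v, (F v u * z v) ^ 2 = deg G F v * z v ^ 2 := by
    intro v
    rw [deg, Finset.sum_mul]
    refine Finset.sum_congr rfl fun u _ => by ring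
  have hswap := sum_neighbor_swap G (fun v u => (F v u * z v) ^ 2)
  have hexp : ∀ v ∈ (Finset.univ : Finset V),
      ∑ u ∈ G.neighborFinset v, (F v u * z v - F u v * z u) ^ 2
      = ((∑ u ∈ G.neighborFinset v, (F v u * z v) ^ 2)
        + (∑ u ∈ G.neighborFinset v, (F u v * z u) ^ 2))
        - 2 * (z v * ∑ u ∈ G.neighborFinset v, F v u * F u v * z u) := by
    intro v _
    have hpt : ∀ u ∈ G.neighborFinset v, (F v u * z v - F u v * z u) ^ 2
        = ((F v u * z v) ^ 2 + (F u v * z u) ^ 2) - 2 * (z v * (F v u * F u v * z u)) :=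
      fun u _ => by ring
    rw [Finset.sum_congr rfl hpt, Finset.sum_sub_distrib, Finset.sum_add_distrib,
      ← Finset.mul_sum, ← Finset.mul_sum]
  have hS : ∑ v, ∑ u ∈ G.neighborFinset v, (F v u * z v - F u v * z u) ^ 2 = 0 := by
    rw [Finset.sum_congr rfl hexp, Finset.sum_sub_distrib, Finset.sum_add_distrib, ← hswap]
    have hC : ∀ v ∈ (Finset.univ : Finset V),
        2 * (z v * ∑ u ∈ G.neighborFinset v, F v u * F u v * z u)
        = 2 * (deg G F v * z v ^ 2) := by
      intro v _
      rw [← hA v]; ring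
    rw [Finset.sum_congr rfl hC, Finset.sum_congr rfl (fun v _ => hT1 v), ← Finset.mul_sum]
    ring
  intro v u hadj
  have h4 := (Finset.sum_eq_zero_iff_of_nonneg
      (fun v _ => Finset.sum_nonneg (fun u _ => sq_nonneg _))).1 hS v (Finset.mem_univ v)
  have h5 := (Finset.sum_eq_zero_iff_of_nonneg (fun u _ => sq_nonneg _)).1 h4 u
      ((SimpleGraph.mem_neighborFinset G v u).2 hadj)
  have h6 := sub_eq_zero.1 (pow_eq_zero_iff (n := 2) (by norm_num) |>.1 h5)
  exact h6

lemma walk_ratio (G : SimpleGraph V) [DecidableRel G.Adj] (F : V → V → ℝ)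
    (hne : ∀ v u : V, G.Adj v u → F v u ≠ 0) {a c : V} (p : G.Walk a c) :
    ∃ r : ℝ, ∀ z : V → ℝ,
      (∀ ⦃v u⦄, G.Adj v u → F v u * z v = F u v * z u) → z c = r * z a := by
  induction p with
  | nil => exact ⟨1, fun z _ => (one_mul _).symm⟩
  | @cons a b c h p ih =>
    obtain ⟨r, hr⟩ := ih
    refine ⟨r * (F a b / F b a), fun z hzp => ?_⟩
    have hb : z b = (F a b / F b a) * z a := by
      rw [div_mul_eq_mul_div, eq_div_iff (hne b a h.symm)]
      linarith [hzp h]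
    rw [hr z hzp, hb]; ring

lemma affine_middle (a b t1 t2 t3 : ℝ) (h12 : t1 ≤ t2) (h23 : t2 ≤ t3)
    (h1 : a * t1 + b ≤ 0) (h3 : a * t3 + b ≤ 0) : a * t2 + b ≤ 0 := by
  rcases le_total 0 a with ha | ha <;> nlinarith

end NoSepAux

/-- Let `G` be a connected graph whose nodes are partitioned into `C ≥ 3`
classes, and let `F` be any sheaf with one-dimensional stalks and non-zero (invertible)
restriction maps.  Then the diffusion `dX/dt = -Δ_F X` cannot yield limiting features that
linearly separate all `C` classes for any initial conditions: any feature matrix whose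
columns lie in `ker Δ_F` (as the diffusion limit does) admits no family of affine
hyperplanes each strictly separating one class from the others. -/
theorem no_linear_separation_three_classes_1d {V : Type*} [Fintype V] [DecidableEq V]
    (G : SimpleGraph V) [DecidableRel G.Adj] (hconn : G.Connected)
    (C : ℕ) (hC : 3 ≤ C) (cls : V → Fin C) (hsurj : Function.Surjective cls)
    (F : V → V → ℝ) (hne : ∀ v u : V, G.Adj v u → F v u ≠ 0) :
    ∀ (f : ℕ) (X : V → Fin f → ℝ),
      (∀ j : Fin f, (normSheafLaplacian1 G F).mulVec (fun v => X v j) = 0) →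
      ¬ ∃ (w : Fin C → Fin f → ℝ) (b : Fin C → ℝ),
          ∀ (k : Fin C) (v : V), (cls v = k ↔ 0 < (∑ i, w k i * X v i) + b k) := by
  intro f X hker
  rintro ⟨w, b, hsep⟩
  open NoSepAux in
  obtain ⟨v1, hv1⟩ := hsurj ⟨0, by omega⟩
  obtain ⟨v2, hv2⟩ := hsurj ⟨1, by omega⟩
  obtain ⟨v3, hv3⟩ := hsurj ⟨2, by omega⟩
  have hne12 : cls v1 ≠ cls v2 := by rw [hv1, hv2]; simp [Fin.ext_iff]
  have hne13 : cls v1 ≠ cls v3 := by rw [hv1, hv3]; simp [Fin.ext_iff]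
  have hne23 : cls v2 ≠ cls v3 := by rw [hv2, hv3]; simp [Fin.ext_iff]
  have hne21 := hne12.symm
  have hne31 := hne13.symm
  have hne32 := hne23.symm
  -- every vertex has a neighbour
  have hnb : ∀ v : V, ∃ u, G.Adj v u := by
    intro v
    have hvv : v1 ≠ v2 := fun h => hne12 (by rw [h])
    have hexu : ∃ u : V, u ≠ v := by
      by_cases h : v = v1
      · exact ⟨v2, fun hh => hvv (h.symm.trans hh.symm)⟩
      · exact ⟨v1, fun hh => h hh.symm⟩
    obtain ⟨u, hu⟩ := hexu
    obtain ⟨p⟩ := hconn.preconnected v u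
    cases p with
    | nil => exact absurd rfl hu
    | cons h _ => exact ⟨_, h⟩
  have hd : ∀ v, 0 < NoSepAux.deg G F v := by
    intro v
    obtain ⟨u, hu⟩ := hnb v
    refine Finset.sum_pos' (fun i _ => sq_nonneg _)
      ⟨u, (SimpleGraph.mem_neighborFinset G v u).2 hu, ?_⟩
    have := hne v u hu
    positivity
  -- edge relations for each column
  have hedge : ∀ j : Fin f, ∀ ⦃v u : V⦄, G.Adj v u →
      F v u * (X v j / Real.sqrt (NoSepAux.deg G F v))
      = F u v * (X u j / Real.sqrt (NoSepAux.deg G F u)) :=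
    fun j => NoSepAux.kernel_edge G F hd (fun v => X v j) (hker j)
  -- propagation ratios
  have hrep : ∀ u : V, ∃ r : ℝ, ∀ z : V → ℝ,
      (∀ ⦃v u'⦄, G.Adj v u' → F v u' * z v = F u' v * z u') → z u = r * z v1 := by
    intro u
    obtain ⟨p⟩ := hconn.preconnected v1 u
    exact NoSepAux.walk_ratio G F hne p
  choose r hr using hrep
  -- features are collinear: X v j = t v * c j
  have hsqrt : ∀ v, Real.sqrt (NoSepAux.deg G F v) ≠ 0 :=
    fun v => ne_of_gt (Real.sqrt_pos.2 (hd v))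
  have hX : ∀ v j, X v j
      = (Real.sqrt (NoSepAux.deg G F v) * r v) * (X v1 j / Real.sqrt (NoSepAux.deg G F v1)) := by
    intro v j
    have h1 : X v j / Real.sqrt (NoSepAux.deg G F v)
        = r v * (X v1 j / Real.sqrt (NoSepAux.deg G F v1)) :=
      hr v (fun u => X u j / Real.sqrt (NoSepAux.deg G F u)) (hedge j)
    have h2 : X v j / Real.sqrt (NoSepAux.deg G F v) * Real.sqrt (NoSepAux.deg G F v) = X v j :=
      div_mul_cancel₀ _ (hsqrt v)
    rw [← h2, h1]; ring
  set t : V → ℝ := fun v => Real.sqrt (NoSepAux.deg G F v) * r v with ht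
  set A : Fin C → ℝ := fun k => ∑ i, w k i * (X v1 i / Real.sqrt (NoSepAux.deg G F v1)) with hA
  have hscore : ∀ k v, (∑ i, w k i * X v i) + b k = A k * t v + b k := by
    intro k v
    congr 1
    rw [hA, ht, Finset.sum_mul]
    refine Finset.sum_congr rfl fun i _ => ?_
    rw [hX v i]; ring
  have key : ∀ va vb vc : V, cls va ≠ cls vb → cls vc ≠ cls vb →
      t va ≤ t vb → t vb ≤ t vc → False := by
    intro va vb vc hab hcb h1 h2
    have hb : 0 < A (cls vb) * t vb + b (cls vb) := by
      rw [← hscore]; exact (hsep (cls vb) vb).1 rfl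
    have ha : A (cls vb) * t va + b (cls vb) ≤ 0 := by
      by_contra hpos
      push_neg at hpos
      exact hab ((hsep (cls vb) va).2 (by rw [hscore]; exact hpos))
    have hc : A (cls vb) * t vc + b (cls vb) ≤ 0 := by
      by_contra hpos
      push_neg at hpos
      exact hcb ((hsep (cls vb) vc).2 (by rw [hscore]; exact hpos))
    exact absurd (NoSepAux.affine_middle _ _ _ _ _ h1 h2 ha hc) (not_le.2 hb)
  rcases le_total (t v1) (t v2) with h12' | h12' <;>
  rcases le_total (t v2) (t v3) with h23' | h23' <;>
  rcases le_total (t v1) (t v3) with h13' | h13' <;>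
  first
    | exact key v1 v2 v3 hne12 hne32 (by linarith) (by linarith)
    | exact key v1 v3 v2 hne13 hne23 (by linarith) (by linarith)
    | exact key v2 v1 v3 hne21 hne31 (by linarith) (by linarith)
    | exact key v2 v3 v1 hne23 hne13 (by linarith) (by linarith)
    | exact key v3 v1 v2 hne31 hne21 (by linarith) (by linarith)
    | exact key v3 v2 v1 hne32 hne12 (by linarith) (by linarith)
end

section
/- Let F be a sheaf with all stalks R and restriction maps satisfying F_{v⊴e}F_{u⊴e} > 0 for every edge e = (v,u), let P = I − Δ_F, let W be an f×f weight matrix, and let σ be ReLU or LeakyReLU applied entrywise. Then for Y = σ(P X W), the sheaf Dirichlet energy satisfies E_F(Y) ≤ λ* ‖W^T‖²₂ E_F(X), where λ* = max_{i: λ_i > 0} (λ_i − 1)² over the non-zero eigenvalues λ_i of Δ_F. -/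
open Matrix BigOperators

/-- The sheaf Dirichlet energy `E_F(X) = trace(Xᵀ Δ_F X)` of a feature matrix `X`. -/
noncomputable def dirichletEnergy {V : Type*} [Fintype V] {f : ℕ}
    (Δ : Matrix V V ℝ) (X : Matrix V (Fin f) ℝ) : ℝ :=
  Matrix.trace (Xᵀ * Δ * X)

/-! ### Auxiliary scalar lemmas for (Leaky)ReLU -/

lemma relu_lip (a p q : ℝ) (ha0 : 0 ≤ a) (ha1 : a ≤ 1) :
    |max p (a * p) - max q (a * q)| ≤ |p - q| := by
  refine (abs_max_sub_max_le_max _ _ _ _).trans (max_le le_rfl ?_)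
  rw [← mul_sub, abs_mul, abs_of_nonneg ha0]
  nlinarith [abs_nonneg (p - q)]

lemma relu_hom (a c s : ℝ) (hc : 0 ≤ c) :
    c * max s (a * s) = max (c * s) (a * (c * s)) := by
  rw [mul_max_of_nonneg _ _ hc]; ring_nf

lemma relu_key (a : ℝ) (ha0 : 0 ≤ a) (ha1 : a ≤ 1) {c c' : ℝ} (h : 0 < c * c') (s t : ℝ) :
    (c * max s (a * s) - c' * max t (a * t)) ^ 2 ≤ (c * s - c' * t) ^ 2 := by
  have key : ∀ p q : ℝ, (max p (a*p) - max q (a*q))^2 ≤ (p - q)^2 := by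
    intro p q
    rw [← sq_abs (max p (a*p) - max q (a*q)), ← sq_abs (p - q)]
    exact pow_le_pow_left₀ (abs_nonneg _) (relu_lip a p q ha0 ha1) 2
  rcases mul_pos_iff.mp h with ⟨hc, hc'⟩ | ⟨hc, hc'⟩
  · rw [relu_hom a c s hc.le, relu_hom a c' t hc'.le]
    exact key _ _
  · have h1 : (c * max s (a*s) - c' * max t (a*t))^2
        = (max (-c*s) (a*(-c*s)) - max (-c'*t) (a*(-c'*t)))^2 := by
      rw [← relu_hom a (-c) s (by linarith), ← relu_hom a (-c') t (by linarith)]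
      ring
    rw [h1]
    calc (max (-c*s) (a*(-c*s)) - max (-c'*t) (a*(-c'*t)))^2
        ≤ ((-c*s) - (-c'*t))^2 := key _ _
      _ = (c * s - c' * t)^2 := by ring

/-! ### The edge form of the Dirichlet energy -/

noncomputable def sdeg {V : Type*} [Fintype V] [DecidableEq V]
    (G : SimpleGraph V) [DecidableRel G.Adj] (F : V → V → ℝ) (v : V) : ℝ :=
  Real.sqrt (∑ w ∈ G.neighborFinset v, (F v w) ^ 2)

lemma trace_energy {V : Type*} [Fintype V] {f : ℕ}
    (Δ : Matrix V V ℝ) (M : Matrix V (Fin f) ℝ) :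
    dirichletEnergy Δ M = ∑ v, ∑ u, Δ v u * ∑ k, M v k * M u k := by
  simp only [dirichletEnergy, Matrix.trace, Matrix.diag, Matrix.mul_apply,
    Matrix.transpose_apply, Finset.sum_mul, Finset.mul_sum]
  rw [Finset.sum_comm]
  conv_rhs => rw [Finset.sum_comm]
  refine Finset.sum_congr rfl fun v _ => ?_
  rw [Finset.sum_comm]
  refine Finset.sum_congr rfl fun u _ => Finset.sum_congr rfl fun k _ => by ring

section EdgeForm

variable {V : Type*} [Fintype V] [DecidableEq V]
  (G : SimpleGraph V) [DecidableRel G.Adj] (F : V → V → ℝ)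

omit [DecidableEq V] in
lemma adj_swap_sum (g : V → V → ℝ) :
    ∑ v, ∑ u, (if G.Adj v u then g v u else 0)
      = ∑ v, ∑ u, (if G.Adj v u then g u v else 0) := by
  rw [Finset.sum_comm]
  exact Finset.sum_congr rfl fun v _ => Finset.sum_congr rfl fun u _ =>
    if_congr (G.adj_comm u v) rfl rfl

lemma energy_edge_form {f : ℕ} (M : Matrix V (Fin f) ℝ) :
    dirichletEnergy (normSheafLaplacian1 G F) M
      = (1/2) * ∑ v, ∑ u, (if G.Adj v u then
          ∑ k, (F v u * M v k / sdeg G F v - F u v * M u k / sdeg G F u) ^ 2 else 0) := by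
  set s : V → ℝ := sdeg G F with hs
  set d : V → ℝ := fun v => ∑ w ∈ G.neighborFinset v, (F v w) ^ 2 with hd
  have hsplit : ∀ v u, normSheafLaplacian1 G F v u * ∑ k, M v k * M u k =
      (if v = u then (d v / (s v * s v)) * ∑ k, M v k * M v k else 0)
      + (if G.Adj v u then (-(F v u * F u v) / (s v * s u)) * ∑ k, M v k * M u k else 0) := by
    intro v u
    by_cases hvu : v = u
    · subst hvu
      simp [normSheafLaplacian1, G.irrefl, hs, hd, sdeg]
    · by_cases hadj : G.Adj v u
      · simp [normSheafLaplacian1, hvu, hadj, hs, hd, sdeg]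
      · simp [normSheafLaplacian1, hvu, hadj, hs, hd, sdeg]
  rw [trace_energy]
  simp only [hsplit, Finset.sum_add_distrib]
  have hdiag : (∑ v, ∑ u, if v = u then (d v / (s v * s v)) * ∑ k, M v k * M v k else 0)
      = ∑ v, (d v / (s v * s v)) * ∑ k, M v k * M v k := by
    refine Finset.sum_congr rfl fun v _ => ?_
    simp [Finset.sum_ite_eq]
  rw [hdiag]
  have hexp : ∀ v u, (∑ k, (F v u * M v k / s v - F u v * M u k / s u) ^ 2)
      = (F v u ^ 2 / (s v * s v)) * ∑ k, M v k * M v k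
        - 2 * ((F v u * F u v) / (s v * s u)) * ∑ k, M v k * M u k
        + (F u v ^ 2 / (s u * s u)) * ∑ k, M u k * M u k := by
    intro v u
    have : ∀ k : Fin f, (F v u * M v k / s v - F u v * M u k / s u) ^ 2
        = (F v u ^ 2 / (s v * s v)) * (M v k * M v k)
          - 2 * ((F v u * F u v) / (s v * s u)) * (M v k * M u k)
          + (F u v ^ 2 / (s u * s u)) * (M u k * M u k) := fun k => by ring
    simp only [this, Finset.sum_add_distrib, Finset.sum_sub_distrib, ← Finset.mul_sum]
  have hitesplit : ∀ v u, (if G.Adj v u then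
        (F v u ^ 2 / (s v * s v)) * ∑ k, M v k * M v k
        - 2 * ((F v u * F u v) / (s v * s u)) * ∑ k, M v k * M u k
        + (F u v ^ 2 / (s u * s u)) * ∑ k, M u k * M u k else 0)
      = (if G.Adj v u then (F v u ^ 2 / (s v * s v)) * ∑ k, M v k * M v k else 0)
        - (if G.Adj v u then 2 * ((F v u * F u v) / (s v * s u)) * ∑ k, M v k * M u k else 0)
        + (if G.Adj v u then (F u v ^ 2 / (s u * s u)) * ∑ k, M u k * M u k else 0) := by
    intro v u; split_ifs <;> simp
  simp only [hexp, hitesplit, Finset.sum_add_distrib, Finset.sum_sub_distrib]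
  have hswap : (∑ v, ∑ u, if G.Adj v u then (F u v ^ 2 / (s u * s u)) * ∑ k, M u k * M u k else 0)
      = ∑ v, ∑ u, if G.Adj v u then (F v u ^ 2 / (s v * s v)) * ∑ k, M v k * M v k else 0 :=
    adj_swap_sum G (fun v u => (F u v ^ 2 / (s u * s u)) * ∑ k, M u k * M u k)
  rw [hswap]
  have hT1 : (∑ v, ∑ u, if G.Adj v u then (F v u ^ 2 / (s v * s v)) * ∑ k, M v k * M v k else 0)
      = ∑ v, (d v / (s v * s v)) * ∑ k, M v k * M v k := by
    refine Finset.sum_congr rfl fun v _ => ?_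
    rw [← Finset.sum_filter, ← SimpleGraph.neighborFinset_eq_filter]
    have : ∀ u ∈ G.neighborFinset v,
        (F v u ^ 2 / (s v * s v)) * ∑ k, M v k * M v k
          = F v u ^ 2 * ((∑ k, M v k * M v k) / (s v * s v)) := fun u _ => by ring
    rw [Finset.sum_congr rfl this, ← Finset.sum_mul, hd]
    ring
  rw [hT1]
  have hA : (∑ v, ∑ u, if G.Adj v u then (-(F v u * F u v) / (s v * s u)) * ∑ k, M v k * M u k else 0)
      = -(1/2) * ∑ v, ∑ u, if G.Adj v u then 2 * ((F v u * F u v) / (s v * s u)) * ∑ k, M v k * M u k else 0 := by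
    rw [Finset.mul_sum]
    refine Finset.sum_congr rfl fun v _ => ?_
    rw [Finset.mul_sum]
    refine Finset.sum_congr rfl fun u _ => ?_
    split_ifs <;> ring
  rw [hA]
  ring

lemma sdeg_pos (hpos : ∀ v u : V, G.Adj v u → 0 < F v u * F u v)
    {v u : V} (hadj : G.Adj v u) : 0 < sdeg G F v := by
  have hne : F v u ≠ 0 := by
    intro h
    have := hpos v u hadj
    rw [h] at this; simp at this
  have h2 : (0:ℝ) < F v u ^ 2 := by
    rcases hne.lt_or_gt with h | h <;> nlinarith
  refine Real.sqrt_pos.mpr (lt_of_lt_of_le h2 ?_)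
  exact Finset.single_le_sum (f := fun w => F v w ^ 2) (fun i _ => sq_nonneg _)
    ((G.mem_neighborFinset v u).mpr hadj)

/-- Positive semidefiniteness of the normalised sheaf Laplacian. -/
lemma lap_psd (hherm : (normSheafLaplacian1 G F).IsHermitian) :
    (normSheafLaplacian1 G F).PosSemidef := by
  refine Matrix.PosSemidef.of_dotProduct_mulVec_nonneg hherm fun x => ?_
  have hform : star x ⬝ᵥ ((normSheafLaplacian1 G F) *ᵥ x)
      = dirichletEnergy (normSheafLaplacian1 G F) (Matrix.of fun v (_ : Fin 1) => x v) := by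
    rw [trace_energy]
    simp only [star_trivial, dotProduct, Matrix.mulVec, Finset.mul_sum, Fin.sum_univ_one,
      Matrix.of_apply]
    refine Finset.sum_congr rfl fun v _ => Finset.sum_congr rfl fun u _ => by ring
  rw [hform, energy_edge_form]
  refine mul_nonneg (by norm_num) (Finset.sum_nonneg fun v _ => Finset.sum_nonneg fun u _ => ?_)
  split_ifs
  · exact Finset.sum_nonneg fun k _ => sq_nonneg _
  · exact le_rfl

end EdgeForm

/-! ### Spectral part -/

lemma psd_trace_nonneg {n : Type*} [Fintype n] [DecidableEq n] {S : Matrix n n ℝ}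
    (h : S.PosSemidef) : 0 ≤ S.trace := by
  rw [Matrix.trace]
  refine Finset.sum_nonneg fun i _ => ?_
  have := h.dotProduct_mulVec_nonneg (Pi.single i 1)
  simpa [Matrix.diag, dotProduct, Pi.single_apply, Matrix.mulVec, Finset.sum_ite_eq] using this

lemma spectral_psd {V : Type*} [Fintype V] [DecidableEq V] {Δ : Matrix V V ℝ}
    (hherm : Δ.IsHermitian) (hpsd : Δ.PosSemidef) (lam : ℝ)
    (hlam : ∀ i : V, hherm.eigenvalues i ≠ 0 → (hherm.eigenvalues i - 1) ^ 2 ≤ lam) :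
    (lam • Δ - (1 - Δ) * Δ * (1 - Δ)).PosSemidef := by
  set U : Matrix V V ℝ := (hherm.eigenvectorUnitary : Matrix V V ℝ) with hUdef
  set μ : V → ℝ := hherm.eigenvalues with hμ
  set D : Matrix V V ℝ := Matrix.diagonal (RCLike.ofReal ∘ μ) with hD
  have hU : U * star U = 1 := (Matrix.mem_unitaryGroup_iff).mp hherm.eigenvectorUnitary.2
  have hU' : star U * U = 1 := (Matrix.mem_unitaryGroup_iff').mp hherm.eigenvectorUnitary.2
  have hΔ : Δ = U * D * star U := hherm.spectral_theorem
  have key : ∀ A B : Matrix V V ℝ, (U * A * star U) * (U * B * star U) = U * (A * B) * star U := by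
    intro A B
    calc (U * A * star U) * (U * B * star U) = U * A * (star U * U) * (B * star U) := by
          simp only [Matrix.mul_assoc]
      _ = U * (A * B) * star U := by rw [hU', Matrix.mul_one]; simp only [Matrix.mul_assoc]
  have h1 : (1 : Matrix V V ℝ) - Δ = U * (1 - D) * star U := by
    rw [Matrix.mul_sub, Matrix.sub_mul, Matrix.mul_one, hU, ← hΔ]
  have h3 : (1 - Δ) * Δ * (1 - Δ) = U * ((1 - D) * D * (1 - D)) * star U := by
    rw [h1, hΔ, key, key]
  have h2 : lam • Δ = U * (lam • D) * star U := by
    rw [hΔ, Matrix.mul_smul, Matrix.smul_mul]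
  set g : V → ℝ := fun i => lam * μ i - (1 - μ i) * (μ i * (1 - μ i)) with hg
  have hdiagform : lam • D - (1 - D) * D * (1 - D) = Matrix.diagonal g := by
    have hDD : D = Matrix.diagonal μ := by rw [hD, RCLike.ofReal_real_eq_id]; rfl
    rw [hDD, ← Matrix.diagonal_one, Matrix.diagonal_sub, Matrix.diagonal_mul_diagonal,
      Matrix.diagonal_mul_diagonal, ← Matrix.diagonal_smul, ← Matrix.diagonal_sub]
    ext i j
    by_cases hij : i = j
    · subst hij
      simp [Matrix.diagonal_apply_eq, hg]
      ring
    · simp [Matrix.diagonal_apply_ne _ hij]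
  have hgnn : ∀ i, 0 ≤ g i := by
    intro i
    by_cases hzero : μ i = 0
    · simp [hg, hzero]
    · have h1' : (μ i - 1) ^ 2 ≤ lam := hlam i hzero
      have h2' : 0 ≤ μ i := hpsd.eigenvalues_nonneg i
      simp only [hg]
      nlinarith
  have hS : lam • Δ - (1 - Δ) * Δ * (1 - Δ) = U * Matrix.diagonal g * Uᴴ := by
    rw [h2, h3, ← Matrix.sub_mul, ← Matrix.mul_sub, hdiagform, Matrix.star_eq_conjTranspose]
  rw [hS]
  exact (Matrix.posSemidef_diagonal_iff.mpr hgnn).mul_mul_conjTranspose_same U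

lemma step_P {V : Type*} [Fintype V] [DecidableEq V] {Δ : Matrix V V ℝ}
    (hherm : Δ.IsHermitian) (hpsd : Δ.PosSemidef) (lam : ℝ)
    (hlam : ∀ i : V, hherm.eigenvalues i ≠ 0 → (hherm.eigenvalues i - 1) ^ 2 ≤ lam)
    {f : ℕ} (X : Matrix V (Fin f) ℝ) :
    dirichletEnergy Δ ((1 - Δ) * X) ≤ lam * dirichletEnergy Δ X := by
  have hsymm : Δᵀ = Δ := by
    rw [← Matrix.conjTranspose_eq_transpose_of_trivial, hherm.eq]
  have hPt : (1 - Δ)ᵀ = 1 - Δ := by rw [Matrix.transpose_sub, Matrix.transpose_one, hsymm]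
  have key : dirichletEnergy Δ ((1 - Δ) * X)
      = Matrix.trace (Xᵀ * ((1 - Δ) * Δ * (1 - Δ)) * X) := by
    simp only [dirichletEnergy, Matrix.transpose_mul, hPt, Matrix.mul_assoc]
  have key2 : lam * dirichletEnergy Δ X = Matrix.trace (Xᵀ * (lam • Δ) * X) := by
    rw [Matrix.mul_smul, Matrix.smul_mul, Matrix.trace_smul, smul_eq_mul, dirichletEnergy]
  have hpsdS := (spectral_psd hherm hpsd lam hlam).conjTranspose_mul_mul_same X
  rw [Matrix.conjTranspose_eq_transpose_of_trivial] at hpsdS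
  have h0 : 0 ≤ Matrix.trace (Xᵀ * (lam • Δ - (1 - Δ) * Δ * (1 - Δ)) * X) :=
    psd_trace_nonneg hpsdS
  have hsub : Xᵀ * (lam • Δ - (1 - Δ) * Δ * (1 - Δ)) * X
      = Xᵀ * (lam • Δ) * X - Xᵀ * ((1 - Δ) * Δ * (1 - Δ)) * X := by
    rw [Matrix.mul_sub, Matrix.sub_mul]
  rw [hsub, Matrix.trace_sub] at h0
  linarith [key, key2, h0]

/-! ### The nonlinearity/weight step -/

lemma step_sw {V : Type*} [Fintype V] [DecidableEq V]
    (G : SimpleGraph V) [DecidableRel G.Adj] (F : V → V → ℝ)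
    (hpos : ∀ v u : V, G.Adj v u → 0 < F v u * F u v)
    {f : ℕ} (M : Matrix V (Fin f) ℝ) (W : Matrix (Fin f) (Fin f) ℝ)
    (nW : ℝ)
    (hnW : ∀ x : Fin f → ℝ, (Wᵀ.mulVec x) ⬝ᵥ (Wᵀ.mulVec x) ≤ nW ^ 2 * (x ⬝ᵥ x))
    (a : ℝ) (ha0 : 0 ≤ a) (ha1 : a ≤ 1) :
    dirichletEnergy (normSheafLaplacian1 G F) ((M * W).map (fun t => max t (a * t)))
      ≤ nW ^ 2 * dirichletEnergy (normSheafLaplacian1 G F) M := by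
  set s : V → ℝ := sdeg G F with hs
  rw [energy_edge_form, energy_edge_form]
  have hedge : ∀ v u : V, G.Adj v u →
      (∑ k, (F v u * ((M * W).map (fun t => max t (a * t))) v k / s v
             - F u v * ((M * W).map (fun t => max t (a * t))) u k / s u) ^ 2)
        ≤ nW ^ 2 * ∑ k, (F v u * M v k / s v - F u v * M u k / s u) ^ 2 := by
    intro v u hadj
    have hsv : 0 < s v := sdeg_pos G F hpos hadj
    have hsu : 0 < s u := sdeg_pos G F hpos hadj.symm
    have hcc' : 0 < (F v u / s v) * (F u v / s u) := by
      have : (F v u / s v) * (F u v / s u) = (F v u * F u v) / (s v * s u) := by ring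
      rw [this]
      exact div_pos (hpos v u hadj) (mul_pos hsv hsu)
    -- step 1 : drop the nonlinearity
    have hstep1 : (∑ k, (F v u * ((M * W).map (fun t => max t (a * t))) v k / s v
             - F u v * ((M * W).map (fun t => max t (a * t))) u k / s u) ^ 2)
        ≤ ∑ k, (F v u * (M * W) v k / s v - F u v * (M * W) u k / s u) ^ 2 := by
      refine Finset.sum_le_sum fun k _ => ?_
      have e1 : F v u * ((M * W).map (fun t => max t (a * t))) v k / s v
             - F u v * ((M * W).map (fun t => max t (a * t))) u k / s u
          = (F v u / s v) * max ((M*W) v k) (a * ((M*W) v k))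
            - (F u v / s u) * max ((M*W) u k) (a * ((M*W) u k)) := by
        simp only [Matrix.map_apply]
        ring
      have e2 : F v u * (M * W) v k / s v - F u v * (M * W) u k / s u
          = (F v u / s v) * ((M*W) v k) - (F u v / s u) * ((M*W) u k) := by ring
      rw [e1, e2]
      exact relu_key a ha0 ha1 hcc' _ _
    -- step 2 : the weight matrix
    set r : Fin f → ℝ := fun j => F v u * M v j / s v - F u v * M u j / s u with hr
    have hWr : ∀ k, F v u * (M * W) v k / s v - F u v * (M * W) u k / s u
        = (Wᵀ.mulVec r) k := by
      intro k
      simp only [Matrix.mul_apply, Matrix.mulVec, dotProduct, Matrix.transpose_apply, hr,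
        Finset.mul_sum, Finset.sum_div]
      rw [← Finset.sum_sub_distrib]
      exact Finset.sum_congr rfl fun j _ => by ring
    have hstep2 : (∑ k, (F v u * (M * W) v k / s v - F u v * (M * W) u k / s u) ^ 2)
        ≤ nW ^ 2 * ∑ k, (F v u * M v k / s v - F u v * M u k / s u) ^ 2 := by
      have l : (∑ k, (F v u * (M * W) v k / s v - F u v * (M * W) u k / s u) ^ 2)
          = (Wᵀ.mulVec r) ⬝ᵥ (Wᵀ.mulVec r) := by
        simp only [dotProduct, hWr]
        exact Finset.sum_congr rfl fun k _ => by ring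
      have rr : r ⬝ᵥ r = ∑ k, (F v u * M v k / s v - F u v * M u k / s u) ^ 2 := by
        simp only [dotProduct, hr]
        exact Finset.sum_congr rfl fun k _ => by ring
      rw [l, ← rr]
      exact hnW r
    exact hstep1.trans hstep2
  -- put the edgewise bounds together
  have hsum : (∑ v, ∑ u, if G.Adj v u then
          (∑ k, (F v u * ((M * W).map (fun t => max t (a * t))) v k / s v
             - F u v * ((M * W).map (fun t => max t (a * t))) u k / s u) ^ 2) else 0)
      ≤ ∑ v, ∑ u, if G.Adj v u then
          nW ^ 2 * ∑ k, (F v u * M v k / s v - F u v * M u k / s u) ^ 2 else 0 := by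
    refine Finset.sum_le_sum fun v _ => Finset.sum_le_sum fun u _ => ?_
    split_ifs with h
    · exact hedge v u h
    · exact le_rfl
  have hpull : (∑ v, ∑ u, if G.Adj v u then
          nW ^ 2 * ∑ k, (F v u * M v k / s v - F u v * M u k / s u) ^ 2 else 0)
      = nW ^ 2 * ∑ v, ∑ u, (if G.Adj v u then
          ∑ k, (F v u * M v k / s v - F u v * M u k / s u) ^ 2 else 0) := by
    rw [Finset.mul_sum]
    refine Finset.sum_congr rfl fun v _ => ?_
    rw [Finset.mul_sum]
    refine Finset.sum_congr rfl fun u _ => ?_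
    split_ifs <;> ring
  calc (1/2) * ∑ v, ∑ u, (if G.Adj v u then
          (∑ k, (F v u * ((M * W).map (fun t => max t (a * t))) v k / s v
             - F u v * ((M * W).map (fun t => max t (a * t))) u k / s u) ^ 2) else 0)
      ≤ (1/2) * ∑ v, ∑ u, (if G.Adj v u then
          nW ^ 2 * ∑ k, (F v u * M v k / s v - F u v * M u k / s u) ^ 2 else 0) := by
        linarith [hsum]
    _ = nW ^ 2 * ((1/2) * ∑ v, ∑ u, (if G.Adj v u then
          ∑ k, (F v u * M v k / s v - F u v * M u k / s u) ^ 2 else 0)) := by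
        rw [hpull]; ring

/-- Let `F` be a sheaf with one-dimensional stalks and
`F_{v⊴e} F_{u⊴e} > 0` on every edge, `P = I − Δ_F`, `W` an `f × f` weight matrix, and `σ`
(Leaky)ReLU, `σ(t) = max (t, a·t)` with `0 ≤ a ≤ 1`.  Then for `Y = σ(P X W)` one has
`E_F(Y) ≤ λ* ‖Wᵀ‖₂² E_F(X)`, where `λ*` bounds `(λ_i − 1)²` over the non-zero eigenvalues
`λ_i` of `Δ_F` and `‖Wᵀ‖₂` is the spectral norm of `Wᵀ` (both encoded here as upper
bounds `lam` and `nW`). -/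
theorem scn_energy_decrease_1d {V : Type*} [Fintype V] [DecidableEq V]
    (G : SimpleGraph V) [DecidableRel G.Adj]
    (F : V → V → ℝ)
    (hpos : ∀ v u : V, G.Adj v u → 0 < F v u * F u v)
    (hherm : (normSheafLaplacian1 G F).IsHermitian)
    (lam : ℝ)
    (hlam : ∀ i : V, hherm.eigenvalues i ≠ 0 → (hherm.eigenvalues i - 1) ^ 2 ≤ lam)
    {f : ℕ} (W : Matrix (Fin f) (Fin f) ℝ)
    (nW : ℝ) (hnW0 : 0 ≤ nW)
    (hnW : ∀ x : Fin f → ℝ, (Wᵀ.mulVec x) ⬝ᵥ (Wᵀ.mulVec x) ≤ nW ^ 2 * (x ⬝ᵥ x))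
    (a : ℝ) (ha0 : 0 ≤ a) (ha1 : a ≤ 1)
    (X : Matrix V (Fin f) ℝ) :
    dirichletEnergy (normSheafLaplacian1 G F)
        (((1 - normSheafLaplacian1 G F) * X * W).map (fun t => max t (a * t))) ≤
      lam * nW ^ 2 * dirichletEnergy (normSheafLaplacian1 G F) X := by
  have h1 := step_sw G F hpos ((1 - normSheafLaplacian1 G F) * X) W nW hnW a ha0 ha1
  have h2 := step_P hherm (lap_psd G F hherm) lam hlam X
  have h3 : nW ^ 2 * dirichletEnergy (normSheafLaplacian1 G F) ((1 - normSheafLaplacian1 G F) * X)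
      ≤ nW ^ 2 * (lam * dirichletEnergy (normSheafLaplacian1 G F) X) :=
    mul_le_mul_of_nonneg_left h2 (sq_nonneg nW)
  have h4 : nW ^ 2 * (lam * dirichletEnergy (normSheafLaplacian1 G F) X)
      = lam * nW ^ 2 * dirichletEnergy (normSheafLaplacian1 G F) X := by ring
  linarith [h1, h3, h4]
end

section
/- Let Δ be a symmetric positive semi-definite matrix with eigenvalues in [0,2], and let P = I − Δ. Then for every vector x, x^T P Δ P x ≤ λ* · x^T Δ x, where λ* = max over non-zero eigenvalues λ_i of Δ of (λ_i − 1)². -/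
open Matrix

/-- Let `Δ` be a real symmetric positive semi-definite `N × N` matrix
with eigenvalues in `[0, 2]`, and `P = I − Δ`.  Then for every vector `x`,
`xᵀ P Δ P x ≤ λ* · xᵀ Δ x`, where `λ*` is the maximum of `(λ − 1)²` over the non-zero
eigenvalues `λ` of `Δ` (encoded as any upper bound `lam` of those values). -/
theorem rayleigh_PDeltaP_le {N : ℕ} (Δ : Matrix (Fin N) (Fin N) ℝ)
    (hpsd : Δ.PosSemidef)
    (hub : ∀ i : Fin N, hpsd.1.eigenvalues i ≤ 2)
    (lam : ℝ) (hlam0 : 0 ≤ lam)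
    (hlam : ∀ i : Fin N, hpsd.1.eigenvalues i ≠ 0 → (hpsd.1.eigenvalues i - 1) ^ 2 ≤ lam)
    (x : Fin N → ℝ) :
    x ⬝ᵥ ((1 - Δ) * Δ * (1 - Δ)).mulVec x ≤ lam * (x ⬝ᵥ Δ.mulVec x) := by
  have hH := hpsd.1
  set U : Matrix (Fin N) (Fin N) ℝ := (hH.eigenvectorUnitary : Matrix (Fin N) (Fin N) ℝ) with hU
  set μ : Fin N → ℝ := hH.eigenvalues with hμ
  have hUU : star U * U = 1 := by rw [hU]; simpa using congrArg Subtype.val (unitary.star_mul_self hH.eigenvectorUnitary)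
  have hUU' : U * star U = 1 := by rw [hU]; simpa using congrArg Subtype.val (unitary.mul_star_self hH.eigenvectorUnitary)
  have hspec : Δ = U * diagonal μ * star U := by
    have := hH.spectral_theorem
    simpa using this
  have hone : (1 : Matrix (Fin N) (Fin N) ℝ) - Δ = U * diagonal (fun i => 1 - μ i) * star U := by
    rw [hspec]
    have : (diagonal (fun i => 1 - μ i) : Matrix (Fin N) (Fin N) ℝ)
        = 1 - diagonal μ := by
      rw [← diagonal_one, ← diagonal_sub]
    rw [this, Matrix.mul_sub, Matrix.mul_one, Matrix.sub_mul, hUU']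
  have hprod : (1 - Δ) * Δ * (1 - Δ)
      = U * diagonal (fun i => (1 - μ i) * μ i * (1 - μ i)) * star U := by
    rw [hone, hspec]
    have : (diagonal (fun i => (1 - μ i) * μ i * (1 - μ i)) : Matrix (Fin N) (Fin N) ℝ)
        = diagonal (fun i => 1 - μ i) * diagonal μ * diagonal (fun i => 1 - μ i) := by
      simp [diagonal_mul_diagonal]
    rw [this]
    calc U * diagonal (fun i => 1 - μ i) * star U * (U * diagonal μ * star U)
          * (U * diagonal (fun i => 1 - μ i) * star U)
        = U * (diagonal (fun i => 1 - μ i) * (star U * U) * diagonal μ * (star U * U)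
            * diagonal (fun i => 1 - μ i)) * star U := by
          noncomm_ring
      _ = _ := by rw [hUU]; noncomm_ring
  set y : Fin N → ℝ := (star U) *ᵥ x with hy
  have key : ∀ d : Fin N → ℝ, x ⬝ᵥ (U * diagonal d * star U) *ᵥ x = ∑ i, d i * (y i)^2 := by
    intro d
    rw [← Matrix.mulVec_mulVec, ← Matrix.mulVec_mulVec, Matrix.dotProduct_mulVec,
      ← hy]
    have hvm : x ᵥ* U = y := by
      rw [hy]
      ext i
      simp [Matrix.vecMul, Matrix.mulVec, dotProduct, mul_comm]
    rw [hvm]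
    simp [Matrix.mulVec_diagonal, dotProduct, pow_two, mul_comm, mul_assoc, mul_left_comm]
  rw [hprod, key, hspec, key, Finset.mul_sum]
  apply Finset.sum_le_sum
  intro i _
  rcases eq_or_ne (μ i) 0 with h0 | h0
  · simp [h0]
  · have h1 : (1 - μ i) * μ i * (1 - μ i) = μ i * (μ i - 1)^2 := by ring
    have h2 : 0 ≤ μ i := hpsd.eigenvalues_nonneg i
    have h3 := hlam i h0
    have h4 : 0 ≤ (y i)^2 := sq_nonneg _
    rw [h1]
    calc μ i * (μ i - 1)^2 * (y i)^2 ≤ μ i * lam * (y i)^2 := by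
          apply mul_le_mul_of_nonneg_right _ h4
          exact mul_le_mul_of_nonneg_left h3 h2
      _ = lam * (μ i * (y i)^2) := by ring
end

section
/- Let F be a discrete O(d)-bundle over a graph G whose restriction maps satisfy F_{v⊴e} = F_{u⊴e} (depend only on the edge). Then for σ = ReLU applied entrywise, the sheaf Dirichlet energy satisfies E_F(σ(x)) ≤ E_F(x) for every 0-cochain x. -/
open Matrix BigOperators

/-- The sheaf Dirichlet energy
`E_F(x) = (1/2) Σ_{e=(v,u)} ‖F_{v⊴e} x_v/√d_v − F_{u⊴e} x_u/√d_u‖²` of a 0-cochain `x`.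
(The double sum over ordered pairs of adjacent vertices counts every edge twice, whence
the factor `1/4`.) -/
noncomputable def sheafDirichletEnergy {V : Type*} [Fintype V] (G : SimpleGraph V)
    [DecidableRel G.Adj] {d : ℕ} (F : V → V → Matrix (Fin d) (Fin d) ℝ)
    (x : V → Fin d → ℝ) : ℝ :=
  (1 / 4 : ℝ) * ∑ v : V, ∑ u ∈ G.neighborFinset v,
    ((F v u).mulVec ((Real.sqrt (G.degree v))⁻¹ • x v) -
      (F u v).mulVec ((Real.sqrt (G.degree u))⁻¹ • x u)) ⬝ᵥ
    ((F v u).mulVec ((Real.sqrt (G.degree v))⁻¹ • x v) -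
      (F u v).mulVec ((Real.sqrt (G.degree u))⁻¹ • x u))

private lemma orth_dot {d : ℕ} {M : Matrix (Fin d) (Fin d) ℝ}
    (hM : M ∈ Matrix.orthogonalGroup (Fin d) ℝ) (w : Fin d → ℝ) :
    (M.mulVec w) ⬝ᵥ (M.mulVec w) = w ⬝ᵥ w := by
  rw [Matrix.dotProduct_mulVec, Matrix.vecMul_mulVec]
  have h : star M * M = 1 := (Matrix.mem_orthogonalGroup_iff' (Fin d) ℝ).mp hM
  have h' : Mᵀ * M = 1 := h
  rw [h']
  simp

/-- Let `F` be a discrete `O(d)`-bundle over a graph `G` whose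
restriction maps depend only on the edge (`F_{v⊴e} = F_{u⊴e}`).  Then applying ReLU
entrywise does not increase the sheaf Dirichlet energy: `E_F(σ(x)) ≤ E_F(x)`. -/
theorem relu_energy_decrease {V : Type*} [Fintype V] (G : SimpleGraph V)
    [DecidableRel G.Adj] {d : ℕ} (F : V → V → Matrix (Fin d) (Fin d) ℝ)
    (horth : ∀ v u : V, G.Adj v u → F v u ∈ Matrix.orthogonalGroup (Fin d) ℝ)
    (hsym : ∀ v u : V, G.Adj v u → F v u = F u v)
    (x : V → Fin d → ℝ) :
    sheafDirichletEnergy G F (fun v i => max (x v i) 0) ≤ sheafDirichletEnergy G F x := by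
  unfold sheafDirichletEnergy
  have h14 : (0:ℝ) ≤ 1/4 := by norm_num
  apply mul_le_mul_of_nonneg_left _ h14
  apply Finset.sum_le_sum
  intro v _
  apply Finset.sum_le_sum
  intro u hu
  have hadj : G.Adj v u := (G.mem_neighborFinset v u).mp hu
  -- rewrite both sides using orthogonality
  have key : ∀ yv yu : Fin d → ℝ,
      ((F v u).mulVec ((Real.sqrt (G.degree v))⁻¹ • yv) -
        (F u v).mulVec ((Real.sqrt (G.degree u))⁻¹ • yu)) ⬝ᵥ
      ((F v u).mulVec ((Real.sqrt (G.degree v))⁻¹ • yv) -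
        (F u v).mulVec ((Real.sqrt (G.degree u))⁻¹ • yu)) =
      ((Real.sqrt (G.degree v))⁻¹ • yv - (Real.sqrt (G.degree u))⁻¹ • yu) ⬝ᵥ
      ((Real.sqrt (G.degree v))⁻¹ • yv - (Real.sqrt (G.degree u))⁻¹ • yu) := by
    intro yv yu
    rw [← hsym v u hadj, ← Matrix.mulVec_sub]
    exact orth_dot (horth v u hadj) _
  rw [show ((fun v i => max (x v i) 0) v) = (fun i => max (x v i) 0) from rfl,
      show ((fun v i => max (x v i) 0) u) = (fun i => max (x u i) 0) from rfl] 
  rw [key, key]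
  -- now coordinatewise comparison
  unfold dotProduct
  apply Finset.sum_le_sum
  intro i _
  set a := (Real.sqrt (G.degree v))⁻¹
  set b := (Real.sqrt (G.degree u))⁻¹
  have ha : 0 ≤ a := by positivity
  have hb : 0 ≤ b := by positivity
  simp only [Pi.sub_apply, Pi.smul_apply, smul_eq_mul]
  have h1 : a * max (x v i) 0 = max (a * x v i) 0 := by
    rw [mul_max_of_nonneg _ _ ha, mul_zero]
  have h2 : b * max (x u i) 0 = max (b * x u i) 0 := by
    rw [mul_max_of_nonneg _ _ hb, mul_zero]
  rw [h1, h2, ← sq, ← sq]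
  have habs : |max (a * x v i) 0 - max (b * x u i) 0| ≤ |a * x v i - b * x u i| :=
    abs_max_sub_max_le_abs _ _ _
  calc (max (a * x v i) 0 - max (b * x u i) 0)^2
      = |max (a * x v i) 0 - max (b * x u i) 0|^2 := (sq_abs _).symm
    _ ≤ |a * x v i - b * x u i|^2 := by
        apply pow_le_pow_left₀ (abs_nonneg _) habs
    _ = (a * x v i - b * x u i)^2 := sq_abs _
end

section
/- Let F be a discrete O(d)-bundle over a connected graph with F_{v⊴e} = F_{u⊴e} for every edge (symmetric orthogonal restriction maps). Then a 0-cochain x lies in the kernel of the normalised sheaf Laplacian Δ_F if and only if each of the d coordinate signals x^k (the vector in R^n of k-th stalk coordinates across nodes) lies in the kernel of the classical normalised graph Laplacian Δ_0. -/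
open Matrix BigOperators
/-- The classical normalised graph Laplacian `Δ₀ = D^{-1/2}(D − A)D^{-1/2}`. -/
noncomputable def normGraphLaplacian {V : Type*} [Fintype V] [DecidableEq V]
    (G : SimpleGraph V) [DecidableRel G.Adj] : Matrix V V ℝ :=
  fun v u =>
    (if v = u then (G.degree v : ℝ) else if G.Adj v u then -1 else 0)
    / (Real.sqrt (G.degree v) * Real.sqrt (G.degree u))

/-- Let `F` be a discrete `O(d)`-bundle over a connected graph with
`F_{v⊴e} = F_{u⊴e}` on every edge.  Then a 0-cochain `x` lies in the kernel of the
normalised sheaf Laplacian `Δ_F` if and only if each coordinate signal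
`x^k = (x (v,k))_v` lies in the kernel of the classical normalised graph Laplacian. -/
theorem symmetric_bundle_kernel_iff_graph_kernel {V : Type*} [Fintype V] [DecidableEq V]
    (G : SimpleGraph V) [DecidableRel G.Adj] (hconn : G.Connected) {d : ℕ}
    (F : V → V → Matrix (Fin d) (Fin d) ℝ)
    (horth : ∀ v u : V, G.Adj v u → F v u ∈ Matrix.orthogonalGroup (Fin d) ℝ)
    (hsym : ∀ v u : V, G.Adj v u → F v u = F u v)
    (x : V × Fin d → ℝ) :
    (normSheafLaplacian G F).mulVec x = 0 ↔
      ∀ k : Fin d, (normGraphLaplacian G).mulVec (fun v => x (v, k)) = 0 := by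

  have key : ∀ p q : V × Fin d, normSheafLaplacian G F p q =
      if p.2 = q.2 then normGraphLaplacian G p.1 q.1 else 0 := by
    rintro ⟨v, i⟩ ⟨u, j⟩
    have hone : ∀ w : V, G.Adj v w → (F v w)ᵀ * F v w = 1 := by
      intro w hw
      have h1 := (horth v w hw).1
      rwa [Matrix.star_eq_conjTranspose,
        Matrix.conjTranspose_eq_transpose_of_trivial] at h1
    simp only [normSheafLaplacian, normGraphLaplacian]
    by_cases hvu : v = u
    · subst hvu
      have hsum : (∑ w ∈ G.neighborFinset v, (F v w)ᵀ * F v w)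
          = (G.degree v : ℝ) • (1 : Matrix (Fin d) (Fin d) ℝ) := by
        rw [Finset.sum_congr rfl
          (fun w hw => hone w ((G.mem_neighborFinset v w).mp hw)),
          Finset.sum_const, SimpleGraph.card_neighborFinset_eq_degree]
        simp [← Nat.cast_smul_eq_nsmul ℝ]
      rw [hsum]
      by_cases hij : i = j <;>
        simp [Matrix.smul_apply, Matrix.one_apply, hij]
    · by_cases hadj : G.Adj v u
      · have : (F v u)ᵀ * F u v = 1 := by
          rw [← hsym v u hadj]; exact hone u hadj
        rw [if_neg hvu, if_pos hadj, this]
        by_cases hij : i = j <;> simp [Matrix.one_apply, hij, hvu, hadj]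
      · simp [hvu, hadj]
  have hmv : ∀ p : V × Fin d, (normSheafLaplacian G F).mulVec x p
      = (normGraphLaplacian G).mulVec (fun v => x (v, p.2)) p.1 := by
    rintro ⟨v, i⟩
    simp only [Matrix.mulVec, dotProduct, key]
    rw [Fintype.sum_prod_type]
    refine Finset.sum_congr rfl fun u _ => ?_
    simp [ite_mul, zero_mul]
  constructor
  · intro h k
    funext v
    have := congrFun h (v, k)
    rw [hmv] at this
    simpa using this
  · intro h
    funext p
    rw [hmv]
    have := congrFun (h p.2) p.1
    simpa using this
end

section
/- For any connected graph G with at least one edge, any stalk dimension d ≥ 2, and any ε > 0, there exist a cellular sheaf F on G whose restriction maps are not all symmetric across edges, a matrix W₁ ∈ R^{d×d} with spectral norm ‖W₁‖₂ < ε, and a 0-cochain x with E_F(x) = 0 but E_F((I ⊗ W₁)x) > 0; that is, an arbitrarily small linear transformation can increase the sheaf Dirichlet energy out of the harmonic space. -/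
open Matrix BigOperators

/-- For any connected graph `G` with at least one edge, any stalk
dimension `d ≥ 2`, and any `ε > 0`, there exist a cellular sheaf `F` on `G` (here a
discrete `O(d)`-bundle, so that its Laplacian block-diagonal is `d_v • I`) whose
restriction maps are not all symmetric across edges, a matrix `W₁` of spectral norm `< ε`,
and a 0-cochain `x` with `E_F(x) = 0` but `E_F((I ⊗ W₁) x) > 0`: an arbitrarily small
linear map can push a harmonic signal out of the harmonic space. -/
theorem small_weight_energy_increase {V : Type*} [Fintype V]
    (G : SimpleGraph V) [DecidableRel G.Adj] (hconn : G.Connected)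
    (hedge : ∃ v u : V, G.Adj v u) {d : ℕ} (hd : 2 ≤ d) (ε : ℝ) (hε : 0 < ε) :
    ∃ (F : V → V → Matrix (Fin d) (Fin d) ℝ) (W₁ : Matrix (Fin d) (Fin d) ℝ)
      (x : V → Fin d → ℝ),
      (∀ v u : V, G.Adj v u → F v u ∈ Matrix.orthogonalGroup (Fin d) ℝ) ∧
      (∃ v u : V, G.Adj v u ∧ F v u ≠ F u v) ∧
      (∃ c : ℝ, 0 ≤ c ∧ c < ε ∧ ∀ y : Fin d → ℝ,
        (W₁.mulVec y) ⬝ᵥ (W₁.mulVec y) ≤ c ^ 2 * (y ⬝ᵥ y)) ∧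
      sheafDirichletEnergy G F x = 0 ∧
      0 < sheafDirichletEnergy G F (fun v => W₁.mulVec (x v)) := by
  classical
  obtain ⟨a, b, hab⟩ := hedge
  set i0 : Fin d := ⟨0, by omega⟩ with hi0
  set i1 : Fin d := ⟨1, by omega⟩ with hi1
  have hi01 : i0 ≠ i1 := by simp [hi0, hi1, Fin.ext_iff]
  set s : Fin d → ℝ := fun i => if i = i1 then -1 else 1 with hs
  set R : Matrix (Fin d) (Fin d) ℝ := Matrix.diagonal s with hR
  set c : ℝ := ε / 2 with hc
  have hc0 : 0 < c := by positivity
  set F : V → V → Matrix (Fin d) (Fin d) ℝ :=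
    fun v u => if v = a ∧ u = b then R else 1 with hF
  set W : Matrix (Fin d) (Fin d) ℝ :=
    Matrix.of (fun i j => if i = i1 ∧ j = i0 then c else 0) with hW
  set x : V → Fin d → ℝ :=
    fun v i => Real.sqrt (G.degree v) * (if i = i0 then 1 else 0) with hx
  have hWmul : ∀ y : Fin d → ℝ, W.mulVec y = fun i => if i = i1 then c * y i0 else 0 := by
    intro y
    funext i
    simp only [hW, Matrix.mulVec, dotProduct, Matrix.of_apply]
    by_cases h : i = i1
    · simp [h, ite_and]
    · simp [h]
  -- key computation for the harmonic cochain
  have key : ∀ v u : V, G.Adj v u →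
      (F v u).mulVec ((Real.sqrt (G.degree v))⁻¹ • x v) =
        fun i => if i = i0 then 1 else 0 := by
    intro v u hvu
    have hdeg : (0:ℝ) < Real.sqrt (G.degree v) := by
      have : 0 < G.degree v := by
        rw [G.degree_pos_iff_exists_adj]; exact ⟨u, hvu⟩
      positivity
    have hxe : (Real.sqrt (G.degree v))⁻¹ • x v = fun i => if i = i0 then 1 else 0 := by
      funext i
      simp only [hx, Pi.smul_apply, smul_eq_mul]
      rw [← mul_assoc, inv_mul_cancel₀ hdeg.ne', one_mul]
    rw [hxe]
    by_cases h : v = a ∧ u = b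
    · have hFvu : F v u = R := if_pos h
      rw [hFvu, hR]
      funext i
      rw [Matrix.mulVec_diagonal]
      by_cases hi : i = i0
      · simp [hi, hs, hi01]
      · simp [hi]
    · have hFvu : F v u = 1 := if_neg h
      rw [hFvu, Matrix.one_mulVec]
  have key2 : ∀ v u : V, G.Adj v u →
      (F v u).mulVec ((Real.sqrt (G.degree v))⁻¹ • fun i => W.mulVec (x v) i) =
        fun i => if i = i1 then (if v = a ∧ u = b then -c else c) else 0 := by
    intro v u hvu
    have hdeg : (0:ℝ) < Real.sqrt (G.degree v) := by
      have : 0 < G.degree v := by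
        rw [G.degree_pos_iff_exists_adj]; exact ⟨u, hvu⟩
      positivity
    have hxe : ((Real.sqrt (G.degree v))⁻¹ • fun i => W.mulVec (x v) i)
        = fun i => if i = i1 then c else 0 := by
      have hxv0 : x v i0 = Real.sqrt (G.degree v) := by simp [hx]
      funext i
      simp only [Pi.smul_apply, smul_eq_mul, hWmul (x v)]
      by_cases hi : i = i1
      · rw [if_pos hi, if_pos hi, hxv0, mul_comm c, ← mul_assoc,
          inv_mul_cancel₀ hdeg.ne', one_mul]
      · simp [hi]
    rw [hxe]
    by_cases h : v = a ∧ u = b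
    · have hFvu : F v u = R := if_pos h
      rw [hFvu, hR, if_pos h]
      funext i
      rw [Matrix.mulVec_diagonal]
      by_cases hi : i = i1
      · simp [hi, hs]
      · simp [hi]
    · have hFvu : F v u = 1 := if_neg h
      rw [hFvu, Matrix.one_mulVec, if_neg h]
  refine ⟨F, W, x, ?_, ?_, ?_, ?_, ?_⟩
  · -- orthogonality
    intro v u _
    rw [Matrix.mem_orthogonalGroup_iff]
    by_cases h : v = a ∧ u = b
    · have hFvu : F v u = R := if_pos h
      rw [hFvu, hR]
      have hst : star (Matrix.diagonal s) = Matrix.diagonal s := by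
        simp [Matrix.star_eq_conjTranspose, Matrix.diagonal_conjTranspose]
      have hs2 : (fun i => s i * s i) = (1 : Fin d → ℝ) := by
        funext i
        by_cases hi : i = i1 <;> simp [hs, hi]
      rw [Matrix.diagonal_transpose, Matrix.diagonal_mul_diagonal, hs2]
      exact Matrix.diagonal_one
    · have hFvu : F v u = 1 := if_neg h
      rw [hFvu]; simp
  · -- asymmetry
    refine ⟨a, b, hab, ?_⟩
    have hne : b ≠ a := hab.ne'
    have h1 : F a b = R := if_pos ⟨rfl, rfl⟩
    have h2 : F b a = 1 := if_neg (fun hcon => hne hcon.1)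
    rw [h1, h2]
    intro hcontr
    have := congr_fun (congr_fun hcontr i1) i1
    rw [hR] at this
    simp [Matrix.diagonal_apply_eq, Matrix.one_apply_eq, hs] at this
    linarith
  · -- norm bound
    refine ⟨c, hc0.le, by rw [hc]; linarith, fun y => ?_⟩
    rw [hWmul y]
    have h1 : (fun i => if i = i1 then c * y i0 else 0) ⬝ᵥ
        (fun i => if i = i1 then c * y i0 else 0) = c ^ 2 * y i0 ^ 2 := by
      simp only [dotProduct]
      rw [Finset.sum_eq_single i1]
      · simp [mul_pow]; ring
      · intro j _ hj; simp [hj]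
      · simp
    rw [h1]
    have h2 : y i0 ^ 2 ≤ y ⬝ᵥ y := by
      simp only [dotProduct, ← sq]
      exact Finset.single_le_sum (fun i _ => sq_nonneg (y i)) (Finset.mem_univ i0)
    nlinarith [sq_nonneg c]
  · -- zero energy
    rw [sheafDirichletEnergy]
    rw [Finset.sum_eq_zero, mul_zero]
    intro v _
    rw [Finset.sum_eq_zero]
    intro u hu
    rw [SimpleGraph.mem_neighborFinset] at hu
    rw [key v u hu, key u v hu.symm]
    simp
  · -- positive energy
    rw [sheafDirichletEnergy]
    have hterm : ∀ v u : V, G.Adj v u →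
        ((F v u).mulVec ((Real.sqrt (G.degree v))⁻¹ • fun i => W.mulVec (x v) i) -
          (F u v).mulVec ((Real.sqrt (G.degree u))⁻¹ • fun i => W.mulVec (x u) i)) =
        fun i => if i = i1 then
          ((if v = a ∧ u = b then -c else c) - (if u = a ∧ v = b then -c else c)) else 0 := by
      intro v u hvu
      rw [key2 v u hvu, key2 u v hvu.symm]
      funext i
      by_cases hi : i = i1 <;> simp [hi]
    have hnn : ∀ v : V, 0 ≤ ∑ u ∈ G.neighborFinset v,
        ((F v u).mulVec ((Real.sqrt (G.degree v))⁻¹ • fun i => W.mulVec (x v) i) -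
          (F u v).mulVec ((Real.sqrt (G.degree u))⁻¹ • fun i => W.mulVec (x u) i)) ⬝ᵥ
        ((F v u).mulVec ((Real.sqrt (G.degree v))⁻¹ • fun i => W.mulVec (x v) i) -
          (F u v).mulVec ((Real.sqrt (G.degree u))⁻¹ • fun i => W.mulVec (x u) i)) := by
      intro v
      apply Finset.sum_nonneg
      intro u _
      apply Finset.sum_nonneg
      intro i _
      exact mul_self_nonneg _
    have hab' : a ≠ b := hab.ne
    have habterm : ((F a b).mulVec ((Real.sqrt (G.degree a))⁻¹ • fun i => W.mulVec (x a) i) -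
          (F b a).mulVec ((Real.sqrt (G.degree b))⁻¹ • fun i => W.mulVec (x b) i)) ⬝ᵥ
        ((F a b).mulVec ((Real.sqrt (G.degree a))⁻¹ • fun i => W.mulVec (x a) i) -
          (F b a).mulVec ((Real.sqrt (G.degree b))⁻¹ • fun i => W.mulVec (x b) i)) = 4 * c ^ 2 := by
      rw [hterm a b hab]
      simp only [dotProduct]
      rw [Finset.sum_eq_single i1]
      · have hba : ¬(b = a ∧ a = b) := fun hcon => hab'.symm hcon.1
        simp only [if_pos rfl, and_self, if_true, if_neg hba]
        ring
      · intro j _ hj; simp [hj]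
      · simp
    have hpos : 0 < ∑ v : V, ∑ u ∈ G.neighborFinset v,
        ((F v u).mulVec ((Real.sqrt (G.degree v))⁻¹ • fun i => W.mulVec (x v) i) -
          (F u v).mulVec ((Real.sqrt (G.degree u))⁻¹ • fun i => W.mulVec (x u) i)) ⬝ᵥ
        ((F v u).mulVec ((Real.sqrt (G.degree v))⁻¹ • fun i => W.mulVec (x v) i) -
          (F u v).mulVec ((Real.sqrt (G.degree u))⁻¹ • fun i => W.mulVec (x u) i)) := by
      apply Finset.sum_pos' (fun v _ => hnn v)
      refine ⟨a, Finset.mem_univ a, ?_⟩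
      apply Finset.sum_pos'
      · intro u _
        apply Finset.sum_nonneg
        intro i _
        exact mul_self_nonneg _
      · refine ⟨b, (SimpleGraph.mem_neighborFinset G a b).2 hab, ?_⟩
        rw [habterm]
        positivity
    exact mul_pos (by norm_num) hpos
end
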